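/- arXiv:1506.02189 — 3 statements merged into one kernel-verified Lean document; each statement's English description precedes it below -/
import Mathlib

section
/- The number of monic square-free polynomials of degree n ≥ 2 over the finite field F_q is q^n - q^{n-1}. -/
open Polynomial UniqueFactorizationMonoid

section Aux

variable {F : Type*} [Field F]

private noncomputable def monicEquivAux (n : ℕ) :
    {f : F[X] // f.Monic ∧ f.natDegree = n} ≃ Polynomial.degreeLT F n where
  toFun f := ⟨f.1 - X ^ n, by
    rcases f with ⟨f, hm, hd⟩
    rw [Polynomial.mem_degreeLT]
    have : f.degree = (X ^ n : F[X]).degree := by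
      rw [degree_X_pow, ← hd, degree_eq_natDegree hm.ne_zero]
    calc (f - X ^ n).degree < f.degree := degree_sub_lt this hm.ne_zero (by
          simp [hm.leadingCoeff, (monic_X_pow n).leadingCoeff])
      _ = (n : WithBot ℕ) := by rw [degree_eq_natDegree hm.ne_zero, hd]⟩
  invFun g := ⟨X ^ n + g.1, by
    have hg := Polynomial.mem_degreeLT.mp g.2
    refine ⟨monic_X_pow_add hg, ?_⟩
    have : (X ^ n + g.1).degree = (n : WithBot ℕ) := by
      rw [add_comm]
      rw [degree_add_eq_right_of_degree_lt (by rwa [degree_X_pow]), degree_X_pow]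
    exact natDegree_eq_of_degree_eq_some this⟩
  left_inv f := by ext1; simp [add_sub_cancel]
  right_inv g := by ext1; simp [add_sub_cancel]

private lemma finite_monicAux [Fintype F] (n : ℕ) :
    Finite {f : F[X] // f.Monic ∧ f.natDegree = n} := by
  have : Finite (Polynomial.degreeLT F n) :=
    Finite.of_equiv _ (Polynomial.degreeLTEquiv F n).toEquiv.symm
  exact Finite.of_equiv _ (monicEquivAux n).symm

private lemma finite_sfAux [Fintype F] (n : ℕ) :
    Finite {f : F[X] // f.Monic ∧ Squarefree f ∧ f.natDegree = n} := by
  have := finite_monicAux (F := F) n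
  exact Finite.of_injective
    (fun f => (⟨f.1, f.2.1, f.2.2.2⟩ : {f : F[X] // f.Monic ∧ f.natDegree = n}))
    (fun a b hab => by
      have := Subtype.mk_eq_mk.mp hab
      exact Subtype.ext this)

private lemma card_monicAux [Fintype F] (n : ℕ) :
    Nat.card {f : F[X] // f.Monic ∧ f.natDegree = n} = Fintype.card F ^ n := by
  rw [Nat.card_congr ((monicEquivAux n).trans (Polynomial.degreeLTEquiv F n).toEquiv)]
  simp [Nat.card_eq_fintype_card, Fintype.card_fun]

private lemma exists_decompAux (n : ℕ) : ∀ f : F[X], f.natDegree ≤ n → f.Monic →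
    ∃ g h : F[X], g.Monic ∧ Squarefree g ∧ h.Monic ∧ f = g * h ^ 2 := by
  induction n using Nat.strong_induction_on with
  | _ n ih =>
  intro f hdeg hm
  by_cases hsf : Squarefree f
  · exact ⟨f, 1, hm, hsf, monic_one, by simp⟩
  · rw [Squarefree] at hsf
    push_neg at hsf
    obtain ⟨x, hxd, hxu⟩ := hsf
    have hx0 : x ≠ 0 := by
      rintro rfl
      simp only [mul_zero, zero_dvd_iff] at hxd
      exact hm.ne_zero hxd
    set p := x * C x.leadingCoeff⁻¹ with hp
    have hpm : p.Monic := monic_mul_leadingCoeff_inv hx0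
    have hpx : Associated x p := associated_mul_unit_right x _
      (isUnit_C.2 (IsUnit.mk0 _ (inv_ne_zero (leadingCoeff_ne_zero.2 hx0))))
    have hpd : p * p ∣ f := (Associated.mul_mul hpx hpx).symm.dvd.trans hxd
    have hpu : ¬ IsUnit p := fun h => hxu (hpx.symm.isUnit h)
    have hp1 : 1 ≤ p.natDegree := by
      by_contra h
      push_neg at h
      interval_cases hd : p.natDegree
      exact hpu (hpm.natDegree_eq_zero.mp hd ▸ isUnit_one)
    obtain ⟨c, hc⟩ := hpd
    have hcm : c.Monic := (hpm.mul hpm).of_mul_monic_left (hc ▸ hm)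
    have hdc : c.natDegree < n := by
      have : f.natDegree = p.natDegree + p.natDegree + c.natDegree := by
        rw [hc, natDegree_mul (mul_ne_zero hpm.ne_zero hpm.ne_zero) hcm.ne_zero,
          natDegree_mul hpm.ne_zero hpm.ne_zero]
      omega
    obtain ⟨g, h, hg, hs, hh, he⟩ := ih c.natDegree hdc c le_rfl hcm
    exact ⟨g, p * h, hg, hs, hpm.mul hh, by rw [hc, he]; ring⟩

private lemma decomp_uniqueAux {g₁ h₁ g₂ h₂ : F[X]} (hg₁ : g₁.Monic) (hs₁ : Squarefree g₁)
    (hh₁ : h₁.Monic) (hg₂ : g₂.Monic) (hs₂ : Squarefree g₂) (hh₂ : h₂.Monic)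
    (heq : g₁ * h₁ ^ 2 = g₂ * h₂ ^ 2) : g₁ = g₂ ∧ h₁ = h₂ := by
  classical
  suffices h : h₁ = h₂ by
    subst h
    exact ⟨mul_right_cancel₀ (pow_ne_zero _ hh₁.ne_zero) heq, rfl⟩
  have key : normalizedFactors g₁ + 2 • normalizedFactors h₁
      = normalizedFactors g₂ + 2 • normalizedFactors h₂ := by
    rw [← normalizedFactors_pow, ← normalizedFactors_pow,
      ← normalizedFactors_mul hg₁.ne_zero (pow_ne_zero _ hh₁.ne_zero),
      ← normalizedFactors_mul hg₂.ne_zero (pow_ne_zero _ hh₂.ne_zero), heq]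
  have hnf : normalizedFactors h₁ = normalizedFactors h₂ := by
    ext p
    have k1 : (normalizedFactors g₁).count p ≤ 1 :=
      Multiset.nodup_iff_count_le_one.mp
        ((squarefree_iff_nodup_normalizedFactors hg₁.ne_zero).mp hs₁) p
    have k2 : (normalizedFactors g₂).count p ≤ 1 :=
      Multiset.nodup_iff_count_le_one.mp
        ((squarefree_iff_nodup_normalizedFactors hg₂.ne_zero).mp hs₂) p
    have := congrArg (Multiset.count p) key
    simp only [Multiset.count_add, Multiset.count_nsmul] at this
    omega
  exact eq_of_monic_of_associated hh₁ hh₂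
    ((prod_normalizedFactors hh₁.ne_zero).symm.trans (hnf ▸ prod_normalizedFactors hh₂.ne_zero))

private lemma card_identityAux [Fintype F] (n : ℕ) :
    Fintype.card F ^ n = ∑ k ∈ Finset.range (n / 2 + 1),
      Nat.card {g : F[X] // g.Monic ∧ Squarefree g ∧ g.natDegree = n - 2 * k} *
        Fintype.card F ^ k := by
  classical
  have hfin1 := fun m => finite_monicAux (F := F) m
  have hfin2 := fun m => finite_sfAux (F := F) m
  set Φ : (Σ k : Fin (n / 2 + 1),
      {g : F[X] // g.Monic ∧ Squarefree g ∧ g.natDegree = n - 2 * (k : ℕ)} ×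
      {h : F[X] // h.Monic ∧ h.natDegree = (k : ℕ)}) →
      {f : F[X] // f.Monic ∧ f.natDegree = n} := fun x =>
    ⟨x.2.1.1 * x.2.2.1 ^ 2, x.2.1.2.1.mul (x.2.2.2.1.pow 2), by
      rcases x with ⟨k, ⟨g, hg, hsg, hdg⟩, ⟨h, hh, hdh⟩⟩
      have hk2 : (k : ℕ) < n / 2 + 1 := k.2
      have hk : 2 * (k : ℕ) ≤ n := by omega
      simp only
      rw [natDegree_mul hg.ne_zero (pow_ne_zero _ hh.ne_zero), natDegree_pow, hdg, hdh]
      omega⟩ with hΦ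
  have hbij : Function.Bijective Φ := by
    constructor
    · rintro ⟨k₁, ⟨g₁, hg₁, hs₁, hd₁⟩, ⟨h₁, hh₁, he₁⟩⟩ ⟨k₂, ⟨g₂, hg₂, hs₂, hd₂⟩, ⟨h₂, hh₂, he₂⟩⟩ h
      simp only [hΦ, Subtype.mk.injEq] at h
      obtain ⟨hg, hh⟩ := decomp_uniqueAux hg₁ hs₁ hh₁ hg₂ hs₂ hh₂ h
      have hk : k₁ = k₂ := by
        apply Fin.ext
        rw [← he₁, ← he₂, hh]
      subst hk hg hh
      rfl
    · rintro ⟨f, hm, hd⟩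
      obtain ⟨g, h, hg, hs, hh, he⟩ := exists_decompAux f.natDegree f le_rfl hm
      have hdeg : n = g.natDegree + 2 * h.natDegree := by
        rw [← hd, he, natDegree_mul hg.ne_zero (pow_ne_zero _ hh.ne_zero), natDegree_pow]
      have hk : h.natDegree < n / 2 + 1 := by omega
      refine ⟨⟨⟨h.natDegree, hk⟩, ⟨g, hg, hs, by simp only [Fin.val_mk]; omega⟩, ⟨h, hh, rfl⟩⟩, ?_⟩
      exact Subtype.ext he.symm
  have hcard := (Nat.card_eq_of_bijective Φ hbij).symm
  rw [card_monicAux] at hcard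
  rw [hcard]
  have : ∀ i : Fin (n / 2 + 1), Fintype
      ({g : F[X] // g.Monic ∧ Squarefree g ∧ g.natDegree = n - 2 * (i : ℕ)} ×
       {h : F[X] // h.Monic ∧ h.natDegree = (i : ℕ)}) := fun i => by
    have := hfin1 (i : ℕ); have := hfin2 (n - 2 * (i : ℕ))
    exact Fintype.ofFinite _
  rw [Nat.card_eq_fintype_card, Fintype.card_sigma]
  rw [Fin.sum_univ_eq_sum_range
    (fun k => Nat.card {g : F[X] // g.Monic ∧ Squarefree g ∧ g.natDegree = n - 2 * k} *
        Fintype.card F ^ k) (n / 2 + 1) |>.symm] -- maybe adjust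
  apply Finset.sum_congr rfl
  intro i _
  have := hfin1 (i : ℕ); have := hfin2 (n - 2 * (i : ℕ))
  rw [← Nat.card_eq_fintype_card, Nat.card_prod, card_monicAux]

end Aux

/-- The number of monic square-free polynomials of degree `n ≥ 2` over a finite
field `F` with `q` elements is `q ^ n - q ^ (n - 1)`. -/
theorem card_monic_squarefree_polynomials
    (F : Type*) [Field F] [Fintype F] (n : ℕ) (hn : 2 ≤ n) :
    Nat.card {f : Polynomial F // f.Monic ∧ Squarefree f ∧ f.natDegree = n} =
      Fintype.card F ^ n - Fintype.card F ^ (n - 1) := by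
  set q := Fintype.card F with hq
  set S : ℕ → ℕ :=
    fun m => Nat.card {f : F[X] // f.Monic ∧ Squarefree f ∧ f.natDegree = m} with hS
  show S n = q ^ n - q ^ (n - 1)
  have h1 : q ^ n = ∑ k ∈ Finset.range (n / 2 + 1), S (n - 2 * k) * q ^ k :=
    card_identityAux (F := F) n
  have h2 : q ^ (n - 2) = ∑ k ∈ Finset.range ((n - 2) / 2 + 1), S (n - 2 - 2 * k) * q ^ k :=
    card_identityAux (F := F) (n - 2)
  rw [Finset.sum_range_succ'] at h1
  simp only [Nat.mul_zero, Nat.sub_zero, pow_zero, mul_one] at h1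
  have hsum : ∑ i ∈ Finset.range (n / 2), S (n - 2 * (i + 1)) * q ^ (i + 1)
      = q * ∑ k ∈ Finset.range ((n - 2) / 2 + 1), S (n - 2 - 2 * k) * q ^ k := by
    rw [Finset.mul_sum]
    have hr : n / 2 = (n - 2) / 2 + 1 := by omega
    rw [hr]
    apply Finset.sum_congr rfl
    intro i _
    have h3 : n - 2 * (i + 1) = n - 2 - 2 * i := by omega
    rw [h3, pow_succ]
    ring
  rw [hsum, ← h2] at h1
  have h4 : q * q ^ (n - 2) = q ^ (n - 1) := by
    rw [← pow_succ']
    congr 1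
    omega
  rw [h4] at h1
  omega
end

section
/- Suppose either n or d is odd, and gcd(q,d)=1 (with finitely many characteristics excluded as needed). Then the average over all monic square-free polynomials f of degree n over F_q of the number of F_q-points (x,y) with y^d = f(x) equals q. Equivalently, the total count |{(x,y,f) : f monic square-free of degree n, y^d = f(x)}| equals q · (q^n - q^{n-1}). -/
open Polynomial Finset
open scoped Classical

set_option maxHeartbeats 1000000

namespace SuperellipticAux

variable {F : Type} [Field F] [Fintype F]





/-- Existence of the squarefree decomposition `f = g^2 * h`. -/
theorem sqf_decomp_exists : ∀ (N : ℕ) (f : F[X]), f.natDegree ≤ N → f.Monic →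
    ∃ g h : F[X], g.Monic ∧ h.Monic ∧ Squarefree h ∧ f = g ^ 2 * h := by
  intro N
  induction N with
  | zero =>
    intro f hdeg hf
    refine ⟨1, f, monic_one, hf, ?_, by ring⟩
    have : f = 1 := hf.natDegree_eq_zero.mp (Nat.le_zero.mp hdeg)
    rw [this]; exact squarefree_one
  | succ N ih =>
    intro f hdeg hf
    by_cases hsq : Squarefree f
    · exact ⟨1, f, monic_one, hf, hsq, by ring⟩
    · have hf0 : f ≠ 0 := hf.ne_zero
      rw [Squarefree] at hsq
      push_neg at hsq
      obtain ⟨a, hadvd, hau⟩ := hsq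
      have ha0 : a ≠ 0 := by rintro rfl; exact hf0 (zero_dvd_iff.mp (by simpa using hadvd))
      set b : F[X] := a * C (a.leadingCoeff)⁻¹ with hb
      have hbmonic : b.Monic := monic_mul_leadingCoeff_inv ha0
      have hbdvd : b * b ∣ f := by
        have hassoc : Associated a b := (associated_mul_isUnit_right_iff
              (isUnit_C.mpr (inv_ne_zero (leadingCoeff_ne_zero.mpr ha0)).isUnit)).mpr
              (Associated.refl _)
        exact ((hassoc.symm.mul_mul hassoc.symm).dvd).trans hadvd
      have hb1 : 1 ≤ b.natDegree := by
        by_contra h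
        push_neg at h
        have hb1' : b = 1 := hbmonic.natDegree_eq_zero.mp (by omega)
        apply hau
        have : IsUnit b := hb1' ▸ isUnit_one
        rw [hb] at this
        exact (isUnit_of_mul_isUnit_left this)
      obtain ⟨c, hc⟩ := hbdvd
      have hcmonic : c.Monic := by
        have := hc ▸ hf
        exact (hbmonic.mul hbmonic).of_mul_monic_left this
      have hcdeg : c.natDegree ≤ N := by
        have h1 : f.natDegree = b.natDegree + b.natDegree + c.natDegree := by
          rw [hc, natDegree_mul (mul_ne_zero hbmonic.ne_zero hbmonic.ne_zero) hcmonic.ne_zero,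
            natDegree_mul hbmonic.ne_zero hbmonic.ne_zero]
        omega
      obtain ⟨g, h, hg, hh, hhs, hgh⟩ := ih c hcdeg hcmonic
      exact ⟨b * g, h, hbmonic.mul hg, hh, hhs, by rw [hc, hgh]; ring⟩

private lemma prime_sq_not_dvd {p h : F[X]} (hp : Prime p) (hhs : Squarefree h) :
    ¬ (p ^ 2 ∣ h) := fun hd => hp.not_unit (hhs p (by rwa [sq] at hd))

/-- If `p` is prime, `p^2 ∣ G^2*H` with `H` squarefree, then `p ∣ G`. -/
private lemma prime_dvd_of_sq_dvd {p G H : F[X]} (hp : Prime p) (hHs : Squarefree H)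
    (hd : p ^ 2 ∣ G ^ 2 * H) : p ∣ G := by
  by_contra hpG
  have hpG2 : ¬ p ∣ G ^ 2 := fun hh => hpG (hp.dvd_of_dvd_pow hh)
  have hpH : p ∣ H := ((hp.dvd_mul.mp (dvd_trans (dvd_pow_self p two_ne_zero) hd)).resolve_left hpG2)
  obtain ⟨H1, hH1⟩ := hpH
  apply prime_sq_not_dvd hp hHs
  rw [hH1]
  obtain ⟨t, ht⟩ := hd
  rw [hH1] at ht
  have : p ∣ G ^ 2 * H1 := by
    have hcancel : p * (G ^ 2 * H1) = p * (p * t) := by ring_nf; ring_nf at ht; linear_combination ht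
    exact ⟨t, mul_left_cancel₀ hp.ne_zero hcancel⟩
  have hpH1 : p ∣ H1 := (hp.dvd_mul.mp this).resolve_left hpG2
  rw [sq]
  exact mul_dvd_mul_left p hpH1

/-- Uniqueness of the squarefree decomposition. -/
theorem sqf_decomp_unique : ∀ (N : ℕ) (g h G H : F[X]), g.natDegree ≤ N →
    g.Monic → h.Monic → Squarefree h → G.Monic → H.Monic → Squarefree H →
    g ^ 2 * h = G ^ 2 * H → g = G ∧ h = H := by
  intro N
  induction N with
  | zero =>
    intro g h G H hdeg hg hh hhs hG hH hHs heq
    have hg1 : g = 1 := hg.natDegree_eq_zero.mp (Nat.le_zero.mp hdeg)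
    subst hg1
    rw [one_pow, one_mul] at heq
    have hGu : IsUnit G := hhs G (by rw [heq, sq]; exact Dvd.intro H rfl)
    have hG1 : G = 1 := hG.isUnit_iff.mp hGu
    subst hG1
    rw [one_pow, one_mul] at heq
    exact ⟨rfl, heq⟩
  | succ N ih =>
    intro g h G H hdeg hg hh hhs hG hH hHs heq
    by_cases hgdeg : g.natDegree = 0
    · -- reuse the zero case argument
      have hg1 : g = 1 := hg.natDegree_eq_zero.mp hgdeg
      subst hg1
      rw [one_pow, one_mul] at heq
      have hGu : IsUnit G := hhs G (by rw [heq, sq]; exact Dvd.intro H rfl)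
      have hG1 : G = 1 := hG.isUnit_iff.mp hGu
      subst hG1
      rw [one_pow, one_mul] at heq
      exact ⟨rfl, heq⟩
    · obtain ⟨p, hpm, hpi, hpdvd⟩ := Polynomial.exists_monic_irreducible_factor g
        (by rw [hg.isUnit_iff]; intro h1; exact hgdeg (by simp [h1]))
      have hp : Prime p := hpi.prime
      have hpG : p ∣ G := prime_dvd_of_sq_dvd hp hHs
        (heq ▸ (pow_dvd_pow_of_dvd hpdvd 2).trans (Dvd.intro h rfl))
      have hpg : p ∣ g := hpdvd
      obtain ⟨g1, hg1⟩ := hpg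
      obtain ⟨G1, hG1⟩ := hpG
      have hp0 : p ≠ 0 := hp.ne_zero
      have hg1m : g1.Monic := hpm.of_mul_monic_left (hg1 ▸ hg)
      have hG1m : G1.Monic := hpm.of_mul_monic_left (hG1 ▸ hG)
      have heq1 : g1 ^ 2 * h = G1 ^ 2 * H := by
        have h2 : p ^ 2 * (g1 ^ 2 * h) = p ^ 2 * (G1 ^ 2 * H) := by
          rw [hg1, hG1] at heq; linear_combination heq
        exact mul_left_cancel₀ (pow_ne_zero 2 hp0) h2
      have hpdeg : 1 ≤ p.natDegree := by
        rcases Nat.eq_zero_or_pos p.natDegree with h0 | h1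
        · exact absurd (hpm.natDegree_eq_zero.mp h0 ▸ isUnit_one) hpi.not_isUnit
        · exact h1
      have hg1deg : g1.natDegree ≤ N := by
        have := hg1 ▸ (natDegree_mul hp0 hg1m.ne_zero)
        omega
      obtain ⟨hgG, hhH⟩ := ih g1 h G1 H hg1deg hg1m hh hhs hG1m hH hHs heq1
      exact ⟨by rw [hg1, hG1, hgG], hhH⟩


variable (F)

noncomputable instance degreeLT.fintype (m : ℕ) : Fintype (degreeLT F m) :=
  Fintype.ofEquiv (Fin m → F) (degreeLTEquiv F m).toEquiv.symm

/-- The finset of polynomials of degree `< m`. -/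
noncomputable def degLTFin (m : ℕ) : Finset F[X] :=
  (Finset.univ : Finset (degreeLT F m)).image Subtype.val

variable {F}

lemma mem_degLTFin {m : ℕ} {f : F[X]} : f ∈ degLTFin F m ↔ f.degree < m := by
  simp only [degLTFin, Finset.mem_image, Finset.mem_univ, true_and, Subtype.exists,
    exists_prop, exists_eq_right]
  exact mem_degreeLT

lemma card_degLTFin (m : ℕ) : (degLTFin F m).card = Fintype.card F ^ m := by
  rw [degLTFin, Finset.card_image_of_injective _ Subtype.val_injective, Finset.card_univ,
    Fintype.card_congr (degreeLTEquiv F m).toEquiv]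
  simp

variable (F) in
/-- The finset of monic polynomials of degree exactly `m`. -/
noncomputable def monicD (m : ℕ) : Finset F[X] :=
  (degLTFin F m).image (fun p => X ^ m + p)

lemma mem_monicD {m : ℕ} {f : F[X]} : f ∈ monicD F m ↔ f.Monic ∧ f.natDegree = m := by
  constructor
  · intro hf
    obtain ⟨p, hp, rfl⟩ := Finset.mem_image.mp hf
    rw [mem_degLTFin] at hp
    have hdeg : degree p < degree ((X : F[X]) ^ m) := by rwa [degree_X_pow]
    have hm : (X ^ m + p : F[X]).Monic := (monic_X_pow m).add_of_left hdeg
    refine ⟨hm, ?_⟩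
    have := degree_add_eq_left_of_degree_lt hdeg
    rw [degree_X_pow] at this
    exact natDegree_eq_of_degree_eq_some this
  · rintro ⟨hm, rfl⟩
    apply Finset.mem_image.mpr
    refine ⟨f - X ^ f.natDegree, ?_, by ring⟩
    rw [mem_degLTFin]
    rcases Nat.eq_zero_or_pos f.natDegree with h0 | hpos
    · rw [h0, hm.natDegree_eq_zero.mp h0]
      simp [degree_one]
    · have := degree_sub_lt (by rw [degree_X_pow, degree_eq_natDegree hm.ne_zero])
        hm.ne_zero (by simp [hm.leadingCoeff])
      rwa [degree_eq_natDegree hm.ne_zero] at this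

lemma card_monicD (m : ℕ) : (monicD F m).card = Fintype.card F ^ m := by
  rw [monicD, Finset.card_image_of_injective _ (add_right_injective _), card_degLTFin]




lemma add_C_mem_monicD {m : ℕ} {f : F[X]} (hf : f ∈ monicD F (m + 1)) (a : F) :
    f + C a ∈ monicD F (m + 1) := by
  rw [mem_monicD] at hf ⊢
  obtain ⟨hm, hdeg⟩ := hf
  have hlt : degree (C a) < degree f := by
    refine degree_C_le.trans_lt ?_
    rw [degree_eq_natDegree hm.ne_zero, hdeg]
    exact_mod_cast Nat.succ_pos m
  refine ⟨hm.add_of_left hlt, ?_⟩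
  rw [← hdeg]
  exact natDegree_eq_of_degree_eq_some
    (by rw [degree_add_eq_left_of_degree_lt hlt, degree_eq_natDegree hm.ne_zero])

lemma card_evalFib (m : ℕ) (x0 : F) (c : F) :
    ((monicD F (m + 1)).filter (fun f => f.eval x0 = c)).card = Fintype.card F ^ m := by
  have key : ∀ c c' : F, ((monicD F (m + 1)).filter (fun f => f.eval x0 = c)).card
      = ((monicD F (m + 1)).filter (fun f => f.eval x0 = c')).card := by
    intro c c'
    apply Finset.card_nbij' (fun f => f + C (c' - c)) (fun f => f + C (c - c'))
    · intro f hf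
      rw [Finset.mem_coe, Finset.mem_filter] at hf ⊢
      exact ⟨add_C_mem_monicD hf.1 _, by simp [hf.2]⟩
    · intro f hf
      rw [Finset.mem_coe, Finset.mem_filter] at hf ⊢
      exact ⟨add_C_mem_monicD hf.1 _, by simp [hf.2]⟩
    · intro f _; simp [add_assoc, ← C_add]
    · intro f _; simp [add_assoc, ← C_add]
  have hsum := Finset.card_eq_sum_card_fiberwise (s := monicD F (m + 1))
    (t := (Finset.univ : Finset F)) (f := fun g : F[X] => g.eval x0)
    (fun x _ => Finset.mem_univ _)
  rw [card_monicD, Finset.sum_congr rfl (fun b _ => key b c)] at hsum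
  simp only [Finset.sum_const, Finset.card_univ, smul_eq_mul] at hsum
  have hq : 0 < Fintype.card F := Fintype.card_pos
  rw [pow_succ'] at hsum
  exact (Nat.eq_of_mul_eq_mul_left hq hsum).symm

lemma card_evalFib_ne (m : ℕ) (x0 : F) :
    ((monicD F (m + 1)).filter (fun f => f.eval x0 ≠ 0)).card
      = Fintype.card F ^ (m + 1) - Fintype.card F ^ m := by
  have hne : (monicD F (m + 1)).filter (fun f => f.eval x0 ≠ 0)
      = monicD F (m + 1) \ (monicD F (m + 1)).filter (fun f => f.eval x0 = 0) := by
    rw [Finset.filter_not]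
  rw [hne, Finset.card_sdiff_of_subset (Finset.filter_subset _ _), card_monicD, card_evalFib m x0 0]




variable (F) in
noncomputable def sqD (m : ℕ) : Finset F[X] := (monicD F m).filter (fun f => Squarefree f)

lemma mem_sqD {m : ℕ} {f : F[X]} :
    f ∈ sqD F m ↔ f.Monic ∧ f.natDegree = m ∧ Squarefree f := by
  rw [sqD, Finset.mem_filter, mem_monicD]; tauto

lemma decompEU {f : F[X]} (hf : f.Monic) : ∃! gh : F[X] × F[X],
    gh.1.Monic ∧ gh.2.Monic ∧ Squarefree gh.2 ∧ f = gh.1 ^ 2 * gh.2 := by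
  obtain ⟨g, h, hg, hh, hhs, hfe⟩ := sqf_decomp_exists f.natDegree f le_rfl hf
  refine ⟨(g, h), ⟨hg, hh, hhs, hfe⟩, ?_⟩
  rintro ⟨G, H⟩ ⟨hG, hH, hHs, hfe'⟩
  obtain ⟨h1, h2⟩ := sqf_decomp_unique G.natDegree G H g h le_rfl hG hH hHs hg hh hhs
    (by rw [← hfe, ← hfe'])
  simp [h1, h2]

noncomputable def decPair (f : F[X]) : F[X] × F[X] :=
  if hf : f.Monic then (decompEU hf).choose else (1, 1)

lemma decPair_spec {f : F[X]} (hf : f.Monic) :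
    (decPair f).1.Monic ∧ (decPair f).2.Monic ∧ Squarefree (decPair f).2 ∧
      f = (decPair f).1 ^ 2 * (decPair f).2 := by
  rw [decPair, dif_pos hf]
  exact (decompEU hf).choose_spec.1

lemma decPair_unique {f g h : F[X]} (hf : f.Monic) (hg : g.Monic) (hh : h.Monic)
    (hhs : Squarefree h) (hfe : f = g ^ 2 * h) : decPair f = (g, h) := by
  rw [decPair, dif_pos hf]
  exact ((decompEU hf).choose_spec.2 (g, h) ⟨hg, hh, hhs, hfe⟩).symm

/-- The decomposition identity for sums over monic polynomials. -/
theorem sum_monicD_decomp (m : ℕ) (w : F[X] → ℂ) :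
    ∑ f ∈ monicD F m, w f =
      ∑ a ∈ Finset.range (m / 2 + 1), ∑ g ∈ monicD F a, ∑ h ∈ sqD F (m - 2 * a),
        w (g ^ 2 * h) := by
  have step1 : ∑ f ∈ monicD F m, w f =
      ∑ x ∈ (Finset.range (m / 2 + 1)).sigma (fun a => (monicD F a) ×ˢ (sqD F (m - 2 * a))),
        w (x.2.1 ^ 2 * x.2.2) := by
    apply Finset.sum_nbij'
      (i := fun f => (⟨(decPair f).1.natDegree, decPair f⟩ : Σ _ : ℕ, F[X] × F[X]))
      (j := fun x => x.2.1 ^ 2 * x.2.2)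
    · intro f hf
      rw [mem_monicD] at hf
      obtain ⟨hfm, hfd⟩ := hf
      obtain ⟨hg, hh, hhs, hfe⟩ := decPair_spec hfm
      have hdeg := congrArg natDegree hfe
      rw [natDegree_mul (pow_ne_zero 2 hg.ne_zero) hh.ne_zero, natDegree_pow] at hdeg
      rw [Finset.mem_sigma, Finset.mem_product, mem_monicD, mem_sqD]
      dsimp only
      exact ⟨Finset.mem_range.mpr (by omega), ⟨hg, rfl⟩, hh, by omega, hhs⟩
    · rintro ⟨a, g, h⟩ hx
      rw [Finset.mem_sigma, Finset.mem_product, mem_monicD, mem_sqD] at hx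
      obtain ⟨ha, ⟨hg, hga⟩, hh, hhd, hhs⟩ := hx
      rw [mem_monicD]
      refine ⟨(hg.pow 2).mul hh, ?_⟩
      rw [natDegree_mul (pow_ne_zero 2 hg.ne_zero) hh.ne_zero, natDegree_pow]
      rw [Finset.mem_range] at ha
      omega
    · intro f hf
      rw [mem_monicD] at hf
      obtain ⟨hg, hh, hhs, hfe⟩ := decPair_spec hf.1
      exact hfe.symm
    · rintro ⟨a, g, h⟩ hx
      rw [Finset.mem_sigma, Finset.mem_product, mem_monicD, mem_sqD] at hx
      dsimp only at hx ⊢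
      obtain ⟨ha, ⟨hg, hga⟩, hh, hhd, hhs⟩ := hx
      have hmon : (g ^ 2 * h).Monic := (hg.pow 2).mul hh
      have hd := decPair_unique hmon hg hh hhs rfl
      rw [hd]
      dsimp only
      rw [hga]
    · intro f hf
      rw [mem_monicD] at hf
      obtain ⟨hg, hh, hhs, hfe⟩ := decPair_spec hf.1
      exact congrArg w hfe
  rw [step1, Finset.sum_sigma]
  exact Finset.sum_congr rfl (fun a _ => Finset.sum_product _ _ _)




noncomputable instance : Fintype (MulChar F ℂ) := Fintype.ofFinite _

lemma monicD_zero : monicD F 0 = {1} := by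
  ext f
  rw [mem_monicD, Finset.mem_singleton]
  constructor
  · rintro ⟨hm, hd⟩; exact hm.natDegree_eq_zero.mp hd
  · rintro rfl; exact ⟨monic_one, natDegree_one⟩

lemma one_apply_field (c : F) : (1 : MulChar F ℂ) c = if c = 0 then 0 else 1 := by
  split_ifs with h
  · rw [h]; exact MulChar.map_nonunit _ (by simp)
  · exact MulChar.one_apply (Ne.isUnit h)

noncomputable def Mw (χ : MulChar F ℂ) (x0 : F) (m : ℕ) : ℂ :=
  ∑ f ∈ monicD F m, χ (f.eval x0)

noncomputable def Sw (χ : MulChar F ℂ) (x0 : F) (m : ℕ) : ℂ :=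
  ∑ f ∈ sqD F m, χ (f.eval x0)

lemma Mw_zero (χ : MulChar F ℂ) (x0 : F) : Mw χ x0 0 = 1 := by
  rw [Mw, monicD_zero]
  simp

lemma Mw_grouped (χ : MulChar F ℂ) (x0 : F) (m : ℕ) :
    Mw χ x0 (m + 1) = (Fintype.card F ^ m : ℕ) * ∑ c : F, χ c := by
  rw [Mw, ← Finset.sum_fiberwise_of_maps_to (g := fun f : F[X] => f.eval x0)
    (t := (Finset.univ : Finset F)) (fun x _ => Finset.mem_univ _)]
  rw [Finset.mul_sum]
  refine Finset.sum_congr rfl (fun c _ => ?_)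
  rw [Finset.sum_congr rfl (fun f hf => by rw [(Finset.mem_filter.mp hf).2]),
    Finset.sum_const, card_evalFib m x0 c, nsmul_eq_mul]

lemma Mw_eq_zero {χ : MulChar F ℂ} (hχ : χ ≠ 1) (x0 : F) (m : ℕ) :
    Mw χ x0 (m + 1) = 0 := by
  rw [Mw_grouped, MulChar.sum_eq_zero_of_ne_one hχ, mul_zero]

lemma Mw_one (x0 : F) (m : ℕ) : Mw (1 : MulChar F ℂ) x0 (m + 1)
    = (((monicD F (m + 1)).filter (fun f => f.eval x0 ≠ 0)).card : ℕ) := by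
  rw [Mw]
  rw [Finset.sum_congr rfl (fun f _ => one_apply_field (f.eval x0))]
  rw [Finset.sum_ite, Finset.sum_const, Finset.sum_const]
  simp [Finset.filter_not]

lemma Mw_master (χ : MulChar F ℂ) (x0 : F) (m : ℕ) :
    Mw χ x0 m = ∑ a ∈ Finset.range (m / 2 + 1), Mw (χ * χ) x0 a * Sw χ x0 (m - 2 * a) := by
  rw [Mw, sum_monicD_decomp m (fun f => χ (f.eval x0))]
  refine Finset.sum_congr rfl (fun a _ => ?_)
  rw [Mw, Sw, Finset.sum_mul_sum]
  refine Finset.sum_congr rfl (fun g _ => Finset.sum_congr rfl (fun h _ => ?_))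
  rw [eval_mul, eval_pow, map_mul, map_pow, MulChar.mul_apply, sq]

lemma Sw_eq_zero_of_sq_ne_one {χ : MulChar F ℂ} (hχ : χ ≠ 1) (hχ2 : χ * χ ≠ 1) (x0 : F)
    {m : ℕ} (hm : m ≠ 0) : Sw χ x0 m = 0 := by
  obtain ⟨k, rfl⟩ := Nat.exists_eq_succ_of_ne_zero hm
  have h0 := Mw_eq_zero hχ x0 k
  rw [Mw_master] at h0
  rw [Finset.sum_eq_single_of_mem 0 (Finset.mem_range.mpr (by omega)) ?_] at h0
  · rw [Mw_zero, one_mul] at h0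
    simpa using h0
  · intro a _ ha
    obtain ⟨b, rfl⟩ := Nat.exists_eq_succ_of_ne_zero ha
    rw [Mw_eq_zero hχ2 x0 b, zero_mul]

lemma Sw_eq_zero_of_odd {χ : MulChar F ℂ} (hχ : χ ≠ 1) (x0 : F) :
    ∀ m : ℕ, Odd m → Sw χ x0 m = 0 := by
  intro m
  induction m using Nat.strong_induction_on with
  | _ m ih =>
    intro hodd
    have hm : m ≠ 0 := by rintro rfl; exact (Nat.not_odd_iff_even.mpr Even.zero) hodd
    obtain ⟨k, rfl⟩ := Nat.exists_eq_succ_of_ne_zero hm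
    have h0 := Mw_eq_zero hχ x0 k
    rw [Mw_master] at h0
    rw [Finset.sum_eq_single_of_mem 0 (Finset.mem_range.mpr (by omega)) ?_] at h0
    · rw [Mw_zero, one_mul] at h0
      simpa using h0
    · intro a ha ha0
      rw [Finset.mem_range] at ha
      obtain ⟨j, hj⟩ := id hodd
      have h2a : 2 * a ≤ k := by omega
      have : Odd (k + 1 - 2 * a) := Nat.Odd.sub_even (by omega) hodd (even_two_mul a)
      rw [ih (k + 1 - 2 * a) (by omega) this, mul_zero]






lemma hasEnough : HasEnoughRootsOfUnity ℂ (Monoid.exponent Fˣ) := by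
  have : NeZero (Monoid.exponent Fˣ) := ⟨Monoid.exponent_ne_zero_of_finite⟩
  infer_instance

lemma card_mulChar : Fintype.card (MulChar F ℂ) = Fintype.card F - 1 := by
  have := hasEnough (F := F)
  rw [← Nat.card_eq_fintype_card, MulChar.card_eq_card_units_of_hasEnoughRootsOfUnity,
    Nat.card_eq_fintype_card, Fintype.card_units]

lemma sum_chars {b : F} (hb : b ≠ 0) :
    ∑ χ : MulChar F ℂ, χ b = if b = 1 then ((Fintype.card F - 1 : ℕ) : ℂ) else 0 := by
  have := hasEnough (F := F)
  split_ifs with h1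
  · subst h1
    simp only [map_one]
    rw [Finset.sum_const, Finset.card_univ, card_mulChar, nsmul_eq_mul, mul_one]
  · obtain ⟨χ, hχ⟩ := MulChar.exists_apply_ne_one_of_hasEnoughRootsOfUnity F ℂ h1
    refine eq_zero_of_mul_eq_self_left hχ ?_
    simp only [Finset.mul_sum, ← MulChar.mul_apply]
    exact Fintype.sum_bijective _ (Group.mulLeft_bijective χ) _ _ fun χ' ↦ rfl

lemma card_identity (m : ℕ) :
    ((Fintype.card F ^ m : ℕ) : ℂ) = ∑ a ∈ Finset.range (m / 2 + 1),
      ((Fintype.card F ^ a : ℕ) : ℂ) * ((sqD F (m - 2 * a)).card : ℂ) := by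
  have h := sum_monicD_decomp (F := F) m (fun _ => (1 : ℂ))
  simp only [Finset.sum_const, nsmul_eq_mul, mul_one] at h
  rw [card_monicD] at h
  rw [h]
  exact Finset.sum_congr rfl (fun a _ => by rw [card_monicD])

lemma card_sqD {m : ℕ} (hm : 2 ≤ m) :
    (sqD F m).card = Fintype.card F ^ m - Fintype.card F ^ (m - 1) := by
  have H1 := card_identity (F := F) m
  have H2 := card_identity (F := F) (m - 2)
  rw [Finset.sum_range_succ'] at H1
  have hdiv : m / 2 = (m - 2) / 2 + 1 := by omega
  rw [hdiv] at H1
  have hre : ∀ a : ℕ, ((Fintype.card F ^ (a + 1) : ℕ) : ℂ) *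
      ((sqD F (m - 2 * (a + 1))).card : ℂ)
      = (Fintype.card F : ℂ) * (((Fintype.card F ^ a : ℕ) : ℂ) *
        ((sqD F ((m - 2) - 2 * a)).card : ℂ)) := by
    intro a
    have : m - 2 * (a + 1) = (m - 2) - 2 * a := by omega
    rw [this]
    push_cast
    ring
  rw [Finset.sum_congr rfl (fun a _ => hre a), ← Finset.mul_sum, ← H2] at H1
  have hpow : (Fintype.card F : ℂ) * ((Fintype.card F ^ (m - 2) : ℕ) : ℂ)
      = ((Fintype.card F ^ (m - 1) : ℕ) : ℂ) := by
    have : m - 1 = (m - 2) + 1 := by omega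
    rw [this]
    push_cast
    ring
  rw [hpow] at H1
  simp only [pow_zero, Nat.cast_one, one_mul, Nat.mul_zero, Nat.sub_zero] at H1
  have hcast : ((Fintype.card F ^ (m - 1) + (sqD F m).card : ℕ) : ℂ)
      = ((Fintype.card F ^ m : ℕ) : ℂ) := by
    push_cast
    push_cast at H1
    linear_combination -H1
  have hnat : Fintype.card F ^ (m - 1) + (sqD F m).card = Fintype.card F ^ m := by
    exact_mod_cast hcast
  have hle : Fintype.card F ^ (m - 1) ≤ Fintype.card F ^ m :=
    Nat.pow_le_pow_right Fintype.card_pos (by omega)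
  omega

lemma sum_y_pow_d {d : ℕ} (hd : d ≠ 0) (χ : MulChar F ℂ) :
    ∑ y ∈ (Finset.univ : Finset F) \ {0}, χ (y ^ d)
      = if χ ^ d = 1 then ((Fintype.card F - 1 : ℕ) : ℂ) else 0 := by
  have key : ∀ y : F, χ (y ^ d) = (χ ^ d) y := fun y => by
    rw [MulChar.pow_apply' χ hd, map_pow]
  split_ifs with h1
  · have : ∀ y ∈ (Finset.univ : Finset F) \ {0}, χ (y ^ d) = 1 := by
      intro y hy
      rw [Finset.mem_sdiff, Finset.mem_singleton] at hy
      rw [key, h1, MulChar.one_apply (Ne.isUnit hy.2)]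
    rw [Finset.sum_congr rfl this, Finset.sum_const, Finset.card_sdiff_of_subset
      (Finset.singleton_subset_iff.mpr (Finset.mem_univ _)), Finset.card_univ,
      Finset.card_singleton, nsmul_eq_mul, mul_one]
  · have h0 : χ ((0 : F) ^ d) = 0 := by
      rw [zero_pow hd]
      exact MulChar.map_nonunit χ not_isUnit_zero
    have htot : ∑ y : F, χ (y ^ d) = 0 := by
      rw [Finset.sum_congr rfl (fun y _ => key y)]
      exact MulChar.sum_eq_zero_of_ne_one h1
    rw [Finset.sum_eq_sum_sdiff_singleton_add (Finset.mem_univ (0 : F))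
      (fun y => χ (y ^ d)), h0, add_zero] at htot
    exact htot

lemma sum_one_char_eval (x0 : F) (t : Finset F[X]) :
    ∑ f ∈ t, (1 : MulChar F ℂ) (f.eval x0)
      = ((t.filter (fun f => ¬ f.eval x0 = 0)).card : ℂ) := by
  rw [Finset.sum_congr rfl (fun f _ => one_apply_field (f.eval x0)), Finset.sum_ite,
    Finset.sum_const, Finset.sum_const]
  simp

lemma sum_filter_char_eval (χ : MulChar F ℂ) (x0 : F) (t : Finset F[X]) :
    ∑ f ∈ t.filter (fun f => ¬ f.eval x0 = 0), χ (f.eval x0)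
      = ∑ f ∈ t, χ (f.eval x0) := by
  apply Finset.sum_filter_of_ne
  intro f _ hne
  intro h0
  exact hne (by rw [h0]; exact MulChar.map_nonunit χ not_isUnit_zero)

lemma key_count {n d : ℕ} (hn : 2 < n) (hd : d ≠ 0) (hodd : Odd n ∨ Odd d) (x0 : F) :
    (((sqD F n) ×ˢ (Finset.univ : Finset F)).filter
        (fun p => p.2 ^ d = p.1.eval x0)).card
      = Fintype.card F ^ n - Fintype.card F ^ (n - 1) := by
  classical
  set q := Fintype.card F with hq
  set s := sqD F n with hs
  set P := ((s ×ˢ Finset.univ).filter (fun p : F[X] × F => p.2 ^ d = p.1.eval x0)) with hP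
  have hsplit := Finset.card_filter_add_card_filter_not (s := P)
    (p := fun p : F[X] × F => p.1.eval x0 = 0)
  have hssplit := Finset.card_filter_add_card_filter_not (s := s)
    (p := fun f : F[X] => f.eval x0 = 0)
  -- the zero part
  have hP0 : (P.filter (fun p : F[X] × F => p.1.eval x0 = 0)).card
      = (s.filter (fun f : F[X] => f.eval x0 = 0)).card := by
    apply Finset.card_nbij' (fun p => p.1) (fun f => (f, (0 : F)))
    · intro p hp
      have h1 := Finset.mem_filter.mp hp
      have h2 := Finset.mem_filter.mp h1.1
      exact Finset.mem_filter.mpr ⟨(Finset.mem_product.mp h2.1).1, h1.2⟩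
    · intro f hf
      simp only [Finset.mem_coe, Finset.mem_filter] at hf
      refine Finset.mem_filter.mpr ⟨Finset.mem_filter.mpr
        ⟨Finset.mem_product.mpr ⟨hf.1, Finset.mem_univ _⟩, ?_⟩, hf.2⟩
      show (0 : F) ^ d = f.eval x0
      rw [hf.2, zero_pow hd]
    · intro p hp
      simp only [hP, Finset.mem_coe, Finset.mem_filter, Finset.mem_product] at hp
      have : p.2 = 0 := by
        have := hp.1.2
        rw [hp.2] at this
        exact pow_eq_zero_iff hd |>.mp this
      exact Prod.ext rfl this.symm
    · intro f hf
      rfl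
  -- the nonzero part, via characters
  set B := (s.filter (fun f : F[X] => ¬ f.eval x0 = 0)) ×ˢ
    ((Finset.univ : Finset F) \ {0}) with hB
  have hP1eq : P.filter (fun p : F[X] × F => ¬ p.1.eval x0 = 0)
      = B.filter (fun p => p.2 ^ d = p.1.eval x0) := by
    ext ⟨f, y⟩
    simp only [hP, hB, Finset.mem_filter, Finset.mem_product, Finset.mem_sdiff,
      Finset.mem_singleton, Finset.mem_univ, true_and]
    constructor
    · rintro ⟨⟨⟨hfs, -⟩, hpow⟩, hne⟩
      refine ⟨⟨⟨hfs, hne⟩, ?_⟩, hpow⟩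
      intro hy0
      rw [hy0, zero_pow hd] at hpow
      exact hne hpow.symm
    · rintro ⟨⟨⟨hfs, hne⟩, hy0⟩, hpow⟩
      exact ⟨⟨⟨hfs, by simp⟩, hpow⟩, hne⟩
  have hq2 : 1 < q := Fintype.one_lt_card
  have hq1ne : ((q - 1 : ℕ) : ℂ) ≠ 0 := Nat.cast_ne_zero.mpr (by omega)
  -- character computation
  have hchar : ((q - 1 : ℕ) : ℂ) * ((B.filter (fun p => p.2 ^ d = p.1.eval x0)).card : ℂ)
      = ((q - 1 : ℕ) : ℂ) * ((s.filter (fun f : F[X] => ¬ f.eval x0 = 0)).card : ℂ) := by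
    have step1 : ((q - 1 : ℕ) : ℂ) * ((B.filter (fun p => p.2 ^ d = p.1.eval x0)).card : ℂ)
        = ∑ p ∈ B, (if p.2 ^ d = p.1.eval x0 then ((q - 1 : ℕ) : ℂ) else 0) := by
      rw [← Finset.sum_filter, Finset.sum_const, nsmul_eq_mul, mul_comm]
    rw [step1]
    have step2 : ∀ p ∈ B, (if p.2 ^ d = p.1.eval x0 then ((q - 1 : ℕ) : ℂ) else 0)
        = ∑ χ : MulChar F ℂ, χ (p.1.eval x0 * (p.2 ^ d)⁻¹) := by
      rintro ⟨f, y⟩ hp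
      simp only [hB, Finset.mem_product, Finset.mem_filter, Finset.mem_sdiff,
        Finset.mem_singleton, Finset.mem_univ, true_and] at hp
      obtain ⟨⟨-, hfne⟩, hyne⟩ := hp
      have hyd : (y : F) ^ d ≠ 0 := pow_ne_zero d hyne
      have hb : f.eval x0 * ((y : F) ^ d)⁻¹ ≠ 0 :=
        mul_ne_zero hfne (inv_ne_zero hyd)
      rw [sum_chars hb]
      congr 1
      rw [mul_inv_eq_one₀ hyd]
      exact propext ⟨fun h => h.symm, fun h => h.symm⟩
    rw [Finset.sum_congr rfl step2, Finset.sum_comm]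
    have step3 : ∀ χ : MulChar F ℂ,
        ∑ p ∈ B, χ (p.1.eval x0 * (p.2 ^ d)⁻¹)
        = (Sw χ x0 n) * (if χ ^ d = 1 then ((q - 1 : ℕ) : ℂ) else 0) := by
      intro χ
      rw [hB, Finset.sum_product]
      have hfact : ∀ f : F[X], ∑ y ∈ (Finset.univ : Finset F) \ {0},
          χ (f.eval x0 * (y ^ d)⁻¹)
          = χ (f.eval x0) * ∑ y ∈ (Finset.univ : Finset F) \ {0}, χ ((y⁻¹) ^ d) := by
        intro f
        rw [Finset.mul_sum]
        refine Finset.sum_congr rfl (fun y hy => ?_)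
        rw [map_mul, ← inv_pow]
      rw [Finset.sum_congr rfl (fun f _ => hfact f), ← Finset.sum_mul]
      have hinv : ∑ y ∈ (Finset.univ : Finset F) \ {0}, χ ((y⁻¹) ^ d)
          = ∑ y ∈ (Finset.univ : Finset F) \ {0}, χ (y ^ d) := by
        apply Finset.sum_nbij' (fun y => y⁻¹) (fun y => y⁻¹)
        · intro y hy
          rw [Finset.mem_sdiff, Finset.mem_singleton] at hy ⊢
          exact ⟨Finset.mem_univ _, inv_ne_zero hy.2⟩
        · intro y hy
          rw [Finset.mem_sdiff, Finset.mem_singleton] at hy ⊢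
          exact ⟨Finset.mem_univ _, inv_ne_zero hy.2⟩
        · intro y _; exact inv_inv y
        · intro y _; exact inv_inv y
        · intro y _; rfl
      rw [hinv, sum_y_pow_d hd χ, sum_filter_char_eval χ x0 s, ← Sw]
    rw [Finset.sum_congr rfl (fun χ _ => step3 χ)]
    rw [Finset.sum_eq_single_of_mem (1 : MulChar F ℂ) (Finset.mem_univ _)]
    · rw [one_pow, if_pos rfl, Sw, sum_one_char_eval x0 s, mul_comm]
    · intro χ _ hχ
      by_cases hχd : χ ^ d = 1
      · rw [if_pos hχd]
        have hSw0 : Sw χ x0 n = 0 := by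
          by_cases hsq : χ * χ = 1
          · have hOddn : Odd n := by
              rcases hodd with h | h
              · exact h
              · exfalso
                apply hχ
                obtain ⟨j, hj⟩ := h
                have : χ ^ d = χ := by
                  rw [hj, pow_add, pow_mul, pow_one, sq, hsq, one_pow, one_mul]
                rw [this] at hχd
                exact hχd
            exact Sw_eq_zero_of_odd hχ x0 n hOddn
          · exact Sw_eq_zero_of_sq_ne_one hχ hsq x0 (by omega)
        rw [hSw0, zero_mul]
      · rw [if_neg hχd, mul_zero]
  have hP1 : (P.filter (fun p : F[X] × F => ¬ p.1.eval x0 = 0)).card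
      = (s.filter (fun f : F[X] => ¬ f.eval x0 = 0)).card := by
    rw [hP1eq]
    have := mul_left_cancel₀ hq1ne hchar
    exact_mod_cast this
  have hcards : (s : Finset F[X]).card = q ^ n - q ^ (n - 1) := card_sqD (by omega)
  have hle : q ^ (n - 1) ≤ q ^ n := Nat.pow_le_pow_right Fintype.card_pos (by omega)
  omega

lemma total_count {n d : ℕ} (hn : 2 < n) (hd : d ≠ 0) (hodd : Odd n ∨ Odd d) :
    (((sqD F n) ×ˢ (Finset.univ : Finset (F × F))).filter
        (fun p : F[X] × F × F => p.2.2 ^ d = p.1.eval p.2.1)).card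
      = Fintype.card F ^ (n + 1) - Fintype.card F ^ n := by
  classical
  set q := Fintype.card F with hq
  set B := ((sqD F n) ×ˢ (Finset.univ : Finset (F × F))).filter
    (fun p : F[X] × F × F => p.2.2 ^ d = p.1.eval p.2.1) with hB
  have hfib := Finset.card_eq_sum_card_fiberwise (s := B) (t := (Finset.univ : Finset F))
    (f := fun p : F[X] × F × F => p.2.1) (fun x _ => Finset.mem_univ _)
  have hx : ∀ x0 : F, (B.filter (fun p : F[X] × F × F => p.2.1 = x0)).card
      = ((sqD F n ×ˢ (Finset.univ : Finset F)).filter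
        (fun p : F[X] × F => p.2 ^ d = p.1.eval x0)).card := by
    intro x0
    apply Finset.card_nbij' (fun p => (p.1, p.2.2)) (fun p => (p.1, (x0, p.2)))
    · intro p hp
      have h1 := Finset.mem_filter.mp hp
      have h2 := Finset.mem_filter.mp h1.1
      have h3 := (Finset.mem_product.mp h2.1).1
      refine Finset.mem_filter.mpr ⟨Finset.mem_product.mpr ⟨h3, Finset.mem_univ _⟩, ?_⟩
      show p.2.2 ^ d = p.1.eval x0
      rw [← h1.2]
      exact h2.2
    · intro p hp
      have h1 := Finset.mem_filter.mp hp
      have h3 := (Finset.mem_product.mp h1.1).1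
      refine Finset.mem_filter.mpr ⟨Finset.mem_filter.mpr
        ⟨Finset.mem_product.mpr ⟨h3, Finset.mem_univ _⟩, ?_⟩, rfl⟩
      exact h1.2
    · intro p hp
      have h1 := Finset.mem_filter.mp hp
      exact Prod.ext rfl (Prod.ext h1.2.symm rfl)
    · intro p hp
      rfl
  rw [Finset.sum_congr rfl (fun x0 _ => hx x0)] at hfib
  rw [Finset.sum_congr rfl (fun x0 _ => key_count hn hd hodd x0)] at hfib
  rw [Finset.sum_const, Finset.card_univ, smul_eq_mul] at hfib
  rw [hfib]
  have e1 : q ^ n = q ^ (n - 1) * q := by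
    rw [← pow_succ]
    congr 1
    omega
  calc q * (q ^ n - q ^ (n - 1)) = (q ^ n - q ^ (n - 1)) * q := mul_comm _ _
    _ = q ^ n * q - q ^ (n - 1) * q := Nat.sub_mul _ _ _
    _ = q ^ (n + 1) - q ^ n := by rw [← pow_succ, ← e1]

end SuperellipticAux

open SuperellipticAux in
/-- Suppose `n > 2` and either `n` or `d` is odd.  Excluding finitely many
characteristics, for every finite field `F` of cardinality `q` coprime to `d`,
the total number of triples `(f, x, y)` with `f` monic square-free of degree
`n` and `y ^ d = f x` equals `q * (q ^ n - q ^ (n - 1)) = q ^ (n + 1) - q ^ n`;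
equivalently, the expected number of `F`-points on a random superelliptic curve
`y ^ d = f x` is `q`. -/
theorem average_points_superelliptic_odd (n d : ℕ) (hn : 2 < n)
    (hodd : Odd n ∨ Odd d) :
    ∃ S : Finset ℕ, ∀ (F : Type) [Field F] [Fintype F],
      ringChar F ∉ S → Nat.Coprime (Fintype.card F) d →
      Nat.card {p : Polynomial F × F × F //
          p.1.Monic ∧ Squarefree p.1 ∧ p.1.natDegree = n ∧
          p.2.2 ^ d = p.1.eval p.2.1} =
        Fintype.card F ^ (n + 1) - Fintype.card F ^ n := by
  classical
  refine ⟨∅, ?_⟩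
  intro F _ _ _ hcop
  have hq2 : 1 < Fintype.card F := Fintype.one_lt_card
  have hd : d ≠ 0 := by
    rintro rfl
    rw [Nat.coprime_zero_right] at hcop
    omega
  have hiff : ∀ p : Polynomial F × F × F,
      (p.1.Monic ∧ Squarefree p.1 ∧ p.1.natDegree = n ∧ p.2.2 ^ d = p.1.eval p.2.1)
        ↔ p ∈ ((sqD F n) ×ˢ (Finset.univ : Finset (F × F))).filter
            (fun p : Polynomial F × F × F => p.2.2 ^ d = p.1.eval p.2.1) := by
    intro p
    rw [Finset.mem_filter, Finset.mem_product, mem_sqD]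
    constructor
    · rintro ⟨h1, h2, h3, h4⟩
      exact ⟨⟨⟨h1, h3, h2⟩, Finset.mem_univ _⟩, h4⟩
    · rintro ⟨⟨⟨h1, h3, h2⟩, -⟩, h4⟩
      exact ⟨h1, h2, h3, h4⟩
  rw [Nat.card_congr (Equiv.subtypeEquivRight hiff), Nat.card_eq_fintype_card,
    Fintype.card_coe]
  exact total_count hn hd hodd
end

section
/- If both n and d are even (and gcd(q,d)=1, excluding finitely many characteristics), then the average over monic square-free polynomials f of degree n over F_q of |{(x,y) : y^d = f(x)}| equals q - q^{-(n-2)}. -/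
open Polynomial Finset

namespace AvgSE

open scoped Classical

set_option linter.unusedSectionVars false

variable {F : Type} [Field F] [Fintype F]

/-- The finset of monic polynomials of degree `k`. -/
noncomputable def monics (F : Type) [Field F] [Fintype F] (k : ℕ) : Finset F[X] :=
  (Finset.univ : Finset (Fin k → F)).image fun a => X ^ k + ∑ i : Fin k, C (a i) * X ^ (i : ℕ)

lemma coeff_phi {k : ℕ} (a : Fin k → F) {j : ℕ} (hj : j < k) :
    (X ^ k + ∑ i : Fin k, C (a i) * X ^ (i : ℕ)).coeff j = a ⟨j, hj⟩ := by
  rw [coeff_add, coeff_X_pow, finset_sum_coeff]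
  have h1 : ∀ i : Fin k, (C (a i) * X ^ (i : ℕ)).coeff j
      = if i = ⟨j, hj⟩ then a i else 0 := by
    intro i
    rw [coeff_C_mul, coeff_X_pow]
    by_cases h : (i : ℕ) = j
    · simp [Fin.ext_iff, h]
    · simp only [Fin.ext_iff]
      rw [if_neg h]
      rw [if_neg (fun hh => h hh.symm), mul_zero]
  rw [Finset.sum_congr rfl fun i _ => h1 i, Finset.sum_ite_eq' Finset.univ ⟨j, hj⟩ a]
  simp [Nat.ne_of_lt hj]

lemma monic_phi {k : ℕ} (a : Fin k → F) :
    (X ^ k + ∑ i : Fin k, C (a i) * X ^ (i : ℕ)).Monic := by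
  rcases Nat.eq_zero_or_pos k with hk | hk
  · subst hk
    simp [monic_one]
  · apply monic_X_pow_add
    refine lt_of_le_of_lt (degree_sum_le _ _) ?_
    rw [Finset.sup_lt_iff (by exact_mod_cast WithBot.bot_lt_coe k)]
    intro i _
    exact lt_of_le_of_lt (degree_C_mul_X_pow_le _ _) (by exact_mod_cast i.isLt)

lemma natDegree_phi {k : ℕ} (a : Fin k → F) :
    (X ^ k + ∑ i : Fin k, C (a i) * X ^ (i : ℕ)).natDegree = k := by
  rcases Nat.eq_zero_or_pos k with hk | hk
  · subst hk
    simp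
  · have hdeg : (∑ i : Fin k, C (a i) * X ^ (i : ℕ)).degree < (X ^ k : F[X]).degree := by
      rw [degree_X_pow]
      refine lt_of_le_of_lt (degree_sum_le _ _) ?_
      rw [Finset.sup_lt_iff (by exact_mod_cast WithBot.bot_lt_coe k)]
      intro i _
      exact lt_of_le_of_lt (degree_C_mul_X_pow_le _ _) (by exact_mod_cast i.isLt)
    have := degree_add_eq_left_of_degree_lt hdeg
    rw [degree_X_pow] at this
    exact natDegree_eq_of_degree_eq_some this

lemma monic_eq_of_coeff_lt {k : ℕ} {f g : F[X]} (hf : f.Monic) (hg : g.Monic)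
    (hfd : f.natDegree = k) (hgd : g.natDegree = k)
    (h : ∀ j < k, f.coeff j = g.coeff j) : f = g := by
  ext j
  rcases lt_trichotomy j k with hj | hj | hj
  · exact h j hj
  · subst hj
    rw [← hfd, hf.coeff_natDegree, hfd, ← hgd, hg.coeff_natDegree]
  · rw [coeff_eq_zero_of_natDegree_lt (by omega), coeff_eq_zero_of_natDegree_lt (by omega)]

lemma mem_monics {k : ℕ} {f : F[X]} : f ∈ monics F k ↔ f.Monic ∧ f.natDegree = k := by
  constructor
  · intro hf
    obtain ⟨a, -, rfl⟩ := Finset.mem_image.mp hf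
    exact ⟨monic_phi a, natDegree_phi a⟩
  · rintro ⟨hm, hd⟩
    refine Finset.mem_image.mpr ⟨fun i => f.coeff i, Finset.mem_univ _, ?_⟩
    refine monic_eq_of_coeff_lt (monic_phi _) hm (natDegree_phi _) hd fun j hj => ?_
    rw [coeff_phi _ hj]

lemma card_monics (k : ℕ) : (monics F k).card = Fintype.card F ^ k := by
  rw [monics, Finset.card_image_of_injOn, Finset.card_univ, Fintype.card_fun,
    Fintype.card_fin]
  intro a _ b _ hab
  funext i
  have := congrArg (fun f => Polynomial.coeff f (i : ℕ)) hab
  simpa [coeff_phi _ i.isLt] using this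

lemma monics_zero : monics F 0 = {1} := by
  ext f
  rw [mem_monics, Finset.mem_singleton]
  constructor
  · rintro ⟨hm, hd⟩
    exact hm.natDegree_eq_zero.mp hd
  · rintro rfl
    exact ⟨monic_one, natDegree_one⟩

lemma card_monics_coeff0 {k : ℕ} (hk : 1 ≤ k) (u : F) :
    ((monics F k).filter (fun g => g.coeff 0 = u)).card = Fintype.card F ^ (k - 1) := by
  have hfib : ∀ u v : F, ((monics F k).filter (fun g => g.coeff 0 = u)).card
      = ((monics F k).filter (fun g => g.coeff 0 = v)).card := by
    intro u v
    have hmem : ∀ (w w' : F) (f : F[X]), f ∈ (monics F k).filter (fun g => g.coeff 0 = w) →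
        f + C (w' - w) ∈ (monics F k).filter (fun g => g.coeff 0 = w') := by
      intro w w' f hf
      rw [Finset.mem_filter, mem_monics] at hf ⊢
      obtain ⟨⟨hm, hd⟩, hc⟩ := hf
      have hdeg : (C (w' - w)).degree < f.degree := by
        refine lt_of_le_of_lt degree_C_le ?_
        rw [degree_eq_natDegree hm.ne_zero, hd]
        exact_mod_cast hk
      refine ⟨⟨hm.add_of_left hdeg, ?_⟩, ?_⟩
      · rw [natDegree_add_eq_left_of_degree_lt hdeg]
        exact hd
      · rw [coeff_add, coeff_C, if_pos rfl, hc]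
        ring
    refine Finset.card_bij' (fun f _ => f + C (v - u)) (fun f _ => f + C (u - v))
      (fun f hf => hmem u v f hf) (fun f hf => hmem v u f hf) ?_ ?_
    · intro f _
      show f + C (v - u) + C (u - v) = f
      rw [add_assoc, ← C_add]
      norm_num
    · intro f _
      show f + C (u - v) + C (v - u) = f
      rw [add_assoc, ← C_add]
      norm_num
  have htot : Fintype.card F ^ k = ∑ u : F, ((monics F k).filter (fun g => g.coeff 0 = u)).card := by
    rw [← card_monics k]
    exact Finset.card_eq_sum_card_fiberwise (fun f _ => Finset.mem_univ _)
  have hconst : ∑ u : F, ((monics F k).filter (fun g => g.coeff 0 = u)).card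
      = Fintype.card F * ((monics F k).filter (fun g => g.coeff 0 = u)).card := by
    rw [Finset.sum_congr rfl fun v _ => hfib v u, Finset.sum_const, Finset.card_univ,
      smul_eq_mul]
  have hq : 0 < Fintype.card F := Fintype.card_pos
  have : Fintype.card F ^ k = Fintype.card F * ((monics F k).filter
      (fun g => g.coeff 0 = u)).card := by rw [htot, hconst]
  have hpow : Fintype.card F ^ k = Fintype.card F * Fintype.card F ^ (k - 1) := by
    conv_lhs => rw [show k = (k - 1) + 1 by omega]
    ring
  have h2 : Fintype.card F * Fintype.card F ^ (k - 1)
      = Fintype.card F * ((monics F k).filter (fun g => g.coeff 0 = u)).card := by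
    rw [← hpow, this]
  exact (Nat.eq_of_mul_eq_mul_left hq h2).symm

/-- number of monic squarefree polynomials of degree n with constant coefficient c -/
noncomputable def N (F : Type) [Field F] [Fintype F] (n : ℕ) (c : F) : ℕ :=
  ((monics F n).filter (fun f => Squarefree f ∧ f.coeff 0 = c)).card

lemma unit_case {s s' g' : F[X]} (hsf : Squarefree s)
    (hg' : g'.Monic) (heq : s = s' * g' ^ 2) : g' = 1 := by
  by_contra h
  have hune : ¬IsUnit g' := fun hu => h (hg'.eq_one_of_isUnit hu)
  obtain ⟨p, hp, hdvd⟩ := WfDvdMonoid.exists_irreducible_factor hune hg'.ne_zero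
  have hpp : p * p ∣ s := by
    rw [heq, sq]
    exact (mul_dvd_mul hdvd hdvd).mul_left s'
  exact hp.not_isUnit (hsf p hpp)

lemma decomp_unique_aux : ∀ (m : ℕ) (g g' s s' : F[X]), g.natDegree ≤ m →
    s.Monic → s'.Monic → Squarefree s → Squarefree s' →
    g.Monic → g'.Monic → s * g ^ 2 = s' * g' ^ 2 → s = s' ∧ g = g' := by
  intro m
  induction m using Nat.strong_induction_on with
  | _ m IH =>
  intro g g' s s' hdeg hs hs' hsf hsf' hg hg' heq
  by_cases hGu : IsUnit g
  · have hg1 : g = 1 := hg.eq_one_of_isUnit hGu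
    subst hg1
    rw [one_pow, mul_one] at heq
    have hg'1 : g' = 1 := unit_case hsf hg' heq
    subst hg'1
    rw [one_pow, mul_one] at heq
    exact ⟨heq, rfl⟩
  · obtain ⟨p, hp, hdvd⟩ := WfDvdMonoid.exists_irreducible_factor hGu hg.ne_zero
    have hp0 : p ≠ 0 := hp.ne_zero
    set r : F[X] := p * C (p.leadingCoeff)⁻¹ with hr
    have hrm : r.Monic := monic_mul_leadingCoeff_inv hp0
    have hassoc : Associated p r := by
      refine associated_mul_unit_right p _ ?_
      exact isUnit_C.mpr (IsUnit.inv (Ne.isUnit (leadingCoeff_ne_zero.mpr hp0)))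
    have hrirr : Irreducible r := hassoc.irreducible hp
    have hrp : Prime r := (UniqueFactorizationMonoid.irreducible_iff_prime).mp hrirr
    have hr0 : r ≠ 0 := hrp.ne_zero
    have hrg : r ∣ g := hassoc.symm.dvd.trans hdvd
    have hrdeg : 1 ≤ r.natDegree := by
      rcases Nat.eq_zero_or_pos r.natDegree with h0 | h1
    -- r monic of degree 0 would be 1, contradicting irreducibility
      · exact absurd (hrm.natDegree_eq_zero.mp h0 ▸ isUnit_one) hrirr.not_isUnit
      · exact h1
    have hrg' : r ∣ g' := by
      by_contra hnd
      have h1 : r ∣ s' * g' ^ 2 := by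
        rw [← heq]
        exact (hrg.trans (dvd_pow_self g two_ne_zero)).mul_left s
      have h2 : r ∣ s' := by
        rcases hrp.dvd_or_dvd h1 with h | h
        · exact h
        · exact absurd (hrp.dvd_of_dvd_pow h) hnd
      obtain ⟨t, ht⟩ := h2
      have h3 : r * r ∣ s' * g' ^ 2 := by
        rw [← heq]
        obtain ⟨u, hu⟩ := hrg
        exact ⟨s * u ^ 2, by rw [hu]; ring⟩
      rw [ht] at h3
      have h4 : r ∣ t * g' ^ 2 :=
        (mul_dvd_mul_iff_left hr0).mp (mul_assoc r t (g' ^ 2) ▸ h3)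
      have h5 : r ∣ t := by
        rcases hrp.dvd_or_dvd h4 with h | h
        · exact h
        · exact absurd (hrp.dvd_of_dvd_pow h) hnd
      obtain ⟨w, hw⟩ := h5
      have : r * r ∣ s' := ⟨w, by rw [ht, hw]; ring⟩
      exact hrp.not_isUnit (hsf' r this)
    obtain ⟨u, hu⟩ := hrg
    obtain ⟨u', hu'⟩ := hrg'
    have hum : u.Monic := hrm.of_mul_monic_left (hu ▸ hg)
    have hum' : u'.Monic := hrm.of_mul_monic_left (hu' ▸ hg')
    have hudeg : u.natDegree < g.natDegree := by
      have : g.natDegree = r.natDegree + u.natDegree := by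
        rw [hu]; exact hrm.natDegree_mul hum
      omega
    have heq2 : s * u ^ 2 = s' * u' ^ 2 := by
      have h6 : r ^ 2 * (s * u ^ 2) = r ^ 2 * (s' * u' ^ 2) := by
        rw [hu, hu'] at heq
        ring_nf at heq ⊢
        linear_combination heq
      exact mul_left_cancel₀ (pow_ne_zero 2 hr0) h6
    obtain ⟨e1, e2⟩ := IH u.natDegree (by omega) u u' s s' le_rfl hs hs' hsf hsf' hum hum' heq2
    exact ⟨e1, by rw [hu, hu', e2]⟩

lemma decomp_unique (g g' s s' : F[X]) : s.Monic → s'.Monic → Squarefree s → Squarefree s' →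
    g.Monic → g'.Monic → s * g ^ 2 = s' * g' ^ 2 → s = s' ∧ g = g' :=
  decomp_unique_aux g.natDegree g g' s s' le_rfl

lemma decomp_exists_aux : ∀ (m : ℕ) (f : F[X]), f.natDegree ≤ m → f.Monic →
    ∃ s g : F[X], s.Monic ∧ Squarefree s ∧ g.Monic ∧ s * g ^ 2 = f := by
  intro m
  induction m using Nat.strong_induction_on with
  | _ m IH =>
  intro f hdeg hf
  by_cases hsf : Squarefree f
  · exact ⟨f, 1, hf, hsf, monic_one, by ring⟩
  · rw [Squarefree] at hsf
    push_neg at hsf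
    obtain ⟨x, hxdvd, hxu⟩ := hsf
    have hx0 : x ≠ 0 := by
      rintro rfl
      rw [mul_zero, zero_dvd_iff] at hxdvd
      exact hf.ne_zero hxdvd
    set r : F[X] := x * C (x.leadingCoeff)⁻¹ with hr
    have hrm : r.Monic := monic_mul_leadingCoeff_inv hx0
    have hassoc : Associated x r :=
      associated_mul_unit_right x _ (isUnit_C.mpr (IsUnit.inv (Ne.isUnit (leadingCoeff_ne_zero.mpr hx0))))
    have hru : ¬IsUnit r := fun h => hxu (hassoc.symm.isUnit h)
    have hrdvd : r * r ∣ f := ((hassoc.mul_mul hassoc).symm.dvd).trans hxdvd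
    have hrdeg : 1 ≤ r.natDegree := by
      rcases Nat.eq_zero_or_pos r.natDegree with h0 | h1
      · exact absurd (hrm.natDegree_eq_zero.mp h0 ▸ isUnit_one) hru
      · exact h1
    obtain ⟨t, ht⟩ := hrdvd
    have htm : t.Monic := (hrm.mul hrm).of_mul_monic_left (ht ▸ hf)
    have htdeg : t.natDegree < f.natDegree := by
      have : f.natDegree = (r * r).natDegree + t.natDegree := by
        rw [ht]; exact (hrm.mul hrm).natDegree_mul htm
      have h2 : (r * r).natDegree = r.natDegree + r.natDegree := hrm.natDegree_mul hrm
      omega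
    obtain ⟨s, g, hs, hssf, hgm, hsg⟩ := IH t.natDegree (by omega) t le_rfl htm
    exact ⟨s, r * g, hs, hssf, hrm.mul hgm, by rw [ht, ← hsg]; ring⟩

lemma decomp_exists (f : F[X]) (hf : f.Monic) :
    ∃ s g : F[X], s.Monic ∧ Squarefree s ∧ g.Monic ∧ s * g ^ 2 = f :=
  decomp_exists_aux f.natDegree f le_rfl hf

noncomputable def decompose (f : F[X]) : F[X] × F[X] :=
  if hf : f.Monic then ⟨(decomp_exists f hf).choose, (decomp_exists f hf).choose_spec.choose⟩
  else (1, 1)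

lemma decompose_spec {f : F[X]} (hf : f.Monic) :
    (decompose f).1.Monic ∧ Squarefree (decompose f).1 ∧ (decompose f).2.Monic ∧
      (decompose f).1 * (decompose f).2 ^ 2 = f := by
  rw [decompose, dif_pos hf]
  exact (decomp_exists f hf).choose_spec.choose_spec

lemma decompose_eq {s g f : F[X]} (hs : s.Monic) (hsf : Squarefree s) (hg : g.Monic)
    (h : s * g ^ 2 = f) : decompose f = (s, g) := by
  have hf : f.Monic := h ▸ (hs.mul (hg.pow 2))
  obtain ⟨h1, h2, h3, h4⟩ := decompose_spec hf
  obtain ⟨e1, e2⟩ := decomp_unique (decompose f).2 g (decompose f).1 s h1 hs h2 hsf h3 hg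
    (h4.trans h.symm)
  rw [Prod.ext_iff]
  exact ⟨e1, e2⟩

lemma coeff0_mul_sq (sp gp : F[X]) : (sp * gp ^ 2).coeff 0 = sp.coeff 0 * gp.coeff 0 ^ 2 := by
  rw [mul_coeff_zero, sq, sq, mul_coeff_zero]

/-- key partition identity -/
lemma key {n : ℕ} (hn : 1 ≤ n) {c : F} (hc : c ≠ 0) :
    Fintype.card F ^ (n - 1) =
      ∑ k ∈ range (n / 2 + 1), ∑ g ∈ (monics F k).filter (fun g => g.coeff 0 ≠ 0),
        N F (n - 2 * k) (c * (g.coeff 0)⁻¹ ^ 2) := by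
  rw [← card_monics_coeff0 hn c]
  have hsig : ∑ k ∈ range (n / 2 + 1), ∑ g ∈ (monics F k).filter (fun g => g.coeff 0 ≠ 0),
      N F (n - 2 * k) (c * (g.coeff 0)⁻¹ ^ 2)
      = ((range (n / 2 + 1)).sigma fun k => ((monics F k).filter fun g => g.coeff 0 ≠ 0).sigma
          fun g => (monics F (n - 2 * k)).filter fun f =>
            Squarefree f ∧ f.coeff 0 = c * (g.coeff 0)⁻¹ ^ 2).card := by
    rw [Finset.card_sigma]
    exact Finset.sum_congr rfl fun k _ => (Finset.card_sigma _ _).symm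
  rw [hsig]
  refine Finset.card_bij'
    (fun f _ => ⟨(decompose f).2.natDegree, (decompose f).2, (decompose f).1⟩)
    (fun t _ => t.2.2 * t.2.1 ^ 2) ?_ ?_ ?_ ?_
  · intro f hf
    rw [Finset.mem_filter, mem_monics] at hf
    obtain ⟨⟨hfm, hfd⟩, hfc⟩ := hf
    obtain ⟨hsm, hssf, hgm, hprod⟩ := decompose_spec hfm
    set sp := (decompose f).1
    set gp := (decompose f).2
    have hdeg : n = sp.natDegree + 2 * gp.natDegree := by
      rw [← hfd, ← hprod, hsm.natDegree_mul (hgm.pow 2), hgm.natDegree_pow]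
    have hc0 : sp.coeff 0 * gp.coeff 0 ^ 2 = c := by
      rw [← coeff0_mul_sq, hprod, hfc]
    have hg0 : gp.coeff 0 ≠ 0 := by
      intro h
      rw [h] at hc0
      simp at hc0
      exact hc (hc0.symm)
    refine Finset.mem_sigma.mpr ⟨?_, Finset.mem_sigma.mpr ⟨?_, ?_⟩⟩
    · show gp.natDegree ∈ range (n / 2 + 1)
      exact Finset.mem_range.mpr (by omega)
    · show gp ∈ (monics F gp.natDegree).filter fun g => g.coeff 0 ≠ 0
      rw [Finset.mem_filter, mem_monics]
      exact ⟨⟨hgm, rfl⟩, hg0⟩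
    · show sp ∈ (monics F (n - 2 * gp.natDegree)).filter
        fun f => Squarefree f ∧ f.coeff 0 = c * (gp.coeff 0)⁻¹ ^ 2
      rw [Finset.mem_filter, mem_monics]
      refine ⟨⟨hsm, by omega⟩, hssf, ?_⟩
      rw [← hc0, mul_assoc, ← mul_pow, mul_inv_cancel₀ hg0, one_pow, mul_one]
  · rintro ⟨k, g, sp⟩ ht
    simp only [Finset.mem_sigma, Finset.mem_range, Finset.mem_filter, mem_monics] at ht
    obtain ⟨hk, ⟨⟨hgm, hgd⟩, hg0⟩, ⟨hsm, hsd⟩, hssf, hsc⟩ := ht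
    have h2k : 2 * k ≤ n := by omega
    show sp * g ^ 2 ∈ (monics F n).filter fun f => f.coeff 0 = c
    rw [Finset.mem_filter, mem_monics]
    refine ⟨⟨hsm.mul (hgm.pow 2), ?_⟩, ?_⟩
    · rw [hsm.natDegree_mul (hgm.pow 2), hgm.natDegree_pow, hsd, hgd]
      omega
    · rw [coeff0_mul_sq, hsc, mul_assoc, ← mul_pow, inv_mul_cancel₀ hg0, one_pow, mul_one]
  · intro f hf
    rw [Finset.mem_filter, mem_monics] at hf
    exact (decompose_spec hf.1.1).2.2.2
  · rintro ⟨k, g, sp⟩ ht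
    simp only [Finset.mem_sigma, Finset.mem_range, Finset.mem_filter, mem_monics] at ht
    obtain ⟨hk, ⟨⟨hgm, hgd⟩, hg0⟩, ⟨hsm, hsd⟩, hssf, hsc⟩ := ht
    have hd : decompose (sp * g ^ 2) = (sp, g) := decompose_eq hsm hssf hgm rfl
    show (⟨(decompose (sp * g ^ 2)).2.natDegree, (decompose (sp * g ^ 2)).2,
        (decompose (sp * g ^ 2)).1⟩ : Σ _ : ℕ, Σ _ : F[X], F[X]) = ⟨k, g, sp⟩
    rw [hd]
    dsimp only
    rw [← hgd]

lemma sum_coeff0_fiber {k : ℕ} (hk : 1 ≤ k) (h : F → ℚ) :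
    ∑ g ∈ (monics F k).filter (fun g => g.coeff 0 ≠ 0), h (g.coeff 0)
      = (Fintype.card F : ℚ) ^ (k - 1) * ∑ u ∈ Finset.univ.erase 0, h u := by
  have hmaps : ∀ g ∈ (monics F k).filter (fun g => g.coeff 0 ≠ 0),
      g.coeff 0 ∈ (Finset.univ : Finset F).erase 0 := by
    intro g hg
    rw [Finset.mem_filter] at hg
    exact Finset.mem_erase.mpr ⟨hg.2, Finset.mem_univ _⟩
  rw [← Finset.sum_fiberwise_of_maps_to hmaps (fun g => h (g.coeff 0)), Finset.mul_sum]
  refine Finset.sum_congr rfl fun u hu => ?_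
  have hu0 : u ≠ 0 := (Finset.mem_erase.mp hu).1
  have hfe : ((monics F k).filter (fun g => g.coeff 0 ≠ 0)).filter (fun g => g.coeff 0 = u)
      = (monics F k).filter (fun g => g.coeff 0 = u) := by
    rw [Finset.filter_filter]
    refine Finset.filter_congr fun g _ => ?_
    constructor
    · exact fun hh => hh.2
    · exact fun hh => ⟨hh ▸ hu0, hh⟩
  rw [hfe]
  have hcongr : ∀ g ∈ (monics F k).filter (fun g => g.coeff 0 = u), h (g.coeff 0) = h u :=
    fun g hg => by rw [(Finset.mem_filter.mp hg).2]
  rw [Finset.sum_congr rfl hcongr, Finset.sum_const, card_monics_coeff0 hk u, nsmul_eq_mul]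
  push_cast
  ring

/-- the sum `G_j(c) = ∑_{u ≠ 0} N_j(c u⁻²)` -/
noncomputable def Gq (F : Type) [Field F] [Fintype F] (j : ℕ) (c : F) : ℚ :=
  ∑ u ∈ (Finset.univ : Finset F).erase 0, (N F j (c * u⁻¹ ^ 2) : ℚ)

lemma keyQ {n : ℕ} (hn : 1 ≤ n) {c : F} (hc : c ≠ 0) :
    (Fintype.card F : ℚ) ^ (n - 1) =
      N F n c + ∑ k ∈ range (n / 2), (Fintype.card F : ℚ) ^ k * Gq F (n - 2 * k - 2) c := by
  have h0 := key hn hc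
  have h1 : (Fintype.card F : ℚ) ^ (n - 1)
      = ∑ k ∈ range (n / 2 + 1), ∑ g ∈ (monics F k).filter (fun g => g.coeff 0 ≠ 0),
          (N F (n - 2 * k) (c * (g.coeff 0)⁻¹ ^ 2) : ℚ) := by
    exact_mod_cast congrArg (fun m : ℕ => (m : ℚ)) h0
  rw [Finset.sum_range_succ'] at h1
  have h2 : ∑ g ∈ (monics F 0).filter (fun g => g.coeff 0 ≠ 0),
      (N F (n - 2 * 0) (c * (g.coeff 0)⁻¹ ^ 2) : ℚ) = (N F n c : ℚ) := by
    rw [monics_zero, Finset.filter_singleton]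
    simp
  have h3 : ∀ k, ∑ g ∈ (monics F (k + 1)).filter (fun g => g.coeff 0 ≠ 0),
      (N F (n - 2 * (k + 1)) (c * (g.coeff 0)⁻¹ ^ 2) : ℚ)
      = (Fintype.card F : ℚ) ^ k * Gq F (n - 2 * k - 2) c := by
    intro k
    rw [sum_coeff0_fiber (Nat.le_add_left 1 k)
      (fun u => (N F (n - 2 * (k + 1)) (c * u⁻¹ ^ 2) : ℚ))]
    rw [show n - 2 * (k + 1) = n - 2 * k - 2 by omega]
    rfl
  rw [h2] at h1
  rw [Finset.sum_congr rfl (fun k _ => h3 k)] at h1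
  rw [h1]
  ring

/-- `A n` is the rational number `(q^n - (-1)^n)/(q+1)`. -/
noncomputable def A (F : Type) [Field F] [Fintype F] (n : ℕ) : ℚ :=
  ((Fintype.card F : ℚ) ^ n - (-1) ^ n) / ((Fintype.card F : ℚ) + 1)

lemma N_zero_c (c : F) : N F 0 c = if c = 1 then 1 else 0 := by
  rw [N, monics_zero, Finset.filter_singleton]
  by_cases h : c = 1
  · subst h
    rw [if_pos ⟨squarefree_one, by simp⟩, if_pos rfl, Finset.card_singleton]
  · rw [if_neg, if_neg h, Finset.card_empty]
    rintro ⟨-, h1⟩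
    exact h (by simpa using h1.symm)

lemma qq_pos : 0 < (Fintype.card F : ℚ) := by
  exact_mod_cast Fintype.card_pos

lemma q1_ne : (Fintype.card F : ℚ) + 1 ≠ 0 := by
  have := qq_pos (F := F)
  linarith

lemma A_one : A F 1 = 1 := by
  rw [A]
  have := q1_ne (F := F)
  field_simp
  ring

lemma A_two : A F 2 = (Fintype.card F : ℚ) - 1 := by
  rw [A]
  have := q1_ne (F := F)
  field_simp
  ring

lemma A_step (m : ℕ) : A F (m + 2)
    = (Fintype.card F : ℚ) ^ (m + 1) - (Fintype.card F : ℚ) ^ m + A F m := by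
  rw [A, A]
  have := q1_ne (F := F)
  field_simp
  ring

lemma A_succ (m : ℕ) : A F m + A F (m + 1) = (Fintype.card F : ℚ) ^ m := by
  rw [A, A]
  have := q1_ne (F := F)
  field_simp
  ring

lemma N_one {c : F} (hc : c ≠ 0) : (N F 1 c : ℚ) = 1 := by
  have E := keyQ (F := F) (n := 1) le_rfl hc
  rw [show (1:ℕ) - 1 = 0 by norm_num, show (1:ℕ)/2 = 0 by norm_num, Finset.range_zero,
    Finset.sum_empty, pow_zero] at E
  linarith

lemma Gq_zero (hF2 : ringChar F ≠ 2) {c : F} (hc : c ≠ 0) :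
    Gq F 0 c = (quadraticChar F c : ℚ) + 1 := by
  have hcard := quadraticChar_card_sqrts hF2 c
  rw [Gq]
  have h1 : ∀ u ∈ (Finset.univ.erase (0:F)), (N F 0 (c * u⁻¹ ^ 2) : ℚ)
      = if u ^ 2 = c then (1:ℚ) else 0 := by
    intro u hu
    have hu0 : u ≠ 0 := (Finset.mem_erase.mp hu).1
    rw [N_zero_c, inv_pow, ← div_eq_mul_inv, div_eq_one_iff_eq (pow_ne_zero 2 hu0)]
    by_cases h : u ^ 2 = c
    · rw [if_pos h.symm, if_pos h]
      norm_num
    · rw [if_neg (fun hh => h hh.symm), if_neg h]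
      norm_num
  rw [Finset.sum_congr rfl h1, Finset.sum_boole]
  have hset : (Finset.univ.erase (0:F)).filter (fun u => u ^ 2 = c)
      = {x : F | x ^ 2 = c}.toFinset := by
    ext u
    rw [Set.mem_toFinset, Set.mem_setOf_eq, Finset.mem_filter, Finset.mem_erase]
    constructor
    · rintro ⟨-, h⟩
      exact h
    · intro h
      refine ⟨⟨?_, Finset.mem_univ u⟩, h⟩
      rintro rfl
      rw [zero_pow two_ne_zero] at h
      exact hc h.symm
  rw [hset]
  exact_mod_cast congrArg (fun z : ℤ => (z : ℚ)) hcard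

lemma recurrence {m : ℕ} {c : F} (hc : c ≠ 0) :
    (N F (m + 3) c : ℚ) = (Fintype.card F : ℚ) ^ (m + 2) - (Fintype.card F : ℚ) ^ (m + 1)
      + (Fintype.card F : ℚ) * N F (m + 1) c - Gq F (m + 1) c := by
  have E1 := keyQ (F := F) (n := m + 3) (by omega) hc
  have E2 := keyQ (F := F) (n := m + 1) (by omega) hc
  rw [show (m + 3)/2 = (m + 1)/2 + 1 by omega, Finset.sum_range_succ'] at E1
  have hstep : ∀ k, (Fintype.card F : ℚ) ^ (k + 1) * Gq F (m + 3 - 2 * (k + 1) - 2) c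
      = (Fintype.card F : ℚ) * ((Fintype.card F : ℚ) ^ k * Gq F (m + 1 - 2 * k - 2) c) := by
    intro k
    rw [show m + 3 - 2 * (k + 1) - 2 = m + 1 - 2 * k - 2 by omega]
    ring
  rw [Finset.sum_congr rfl (fun k _ => hstep k), ← Finset.mul_sum] at E1
  rw [show m + 3 - 1 = m + 2 by omega, show m + 3 - 2 * 0 - 2 = m + 1 by omega,
    pow_zero, one_mul] at E1
  rw [show m + 1 - 1 = m by omega] at E2
  have E3 : (Fintype.card F : ℚ) ^ (m + 1) = (Fintype.card F : ℚ) * N F (m + 1) c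
      + (Fintype.card F : ℚ) * ∑ k ∈ range ((m + 1)/2),
        (Fintype.card F : ℚ) ^ k * Gq F (m + 1 - 2 * k - 2) c := by
    rw [pow_succ, mul_comm ((Fintype.card F : ℚ) ^ m), E2, mul_add]
  linarith [E1, E3]

/-- the main formula, for nonzero constant term -/
lemma N_formula (hF2 : ringChar F ≠ 2) :
    ∀ n : ℕ, 1 ≤ n → ∀ c : F, c ≠ 0 →
    (N F n c : ℚ) = A F n - (if Even n then (quadraticChar F c : ℚ) else 0) := by
  intro n
  induction n using Nat.strong_induction_on with
  | _ n IH =>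
  intro hn c hc
  rcases Nat.lt_or_ge n 3 with h3 | h3
  · interval_cases n
    · rw [N_one hc, A_one, if_neg (by simp)]
      norm_num
    · have E := keyQ (F := F) (n := 2) (by norm_num) hc
      rw [show (2:ℕ) - 1 = 1 by norm_num, show (2:ℕ)/2 = 1 by norm_num, Finset.sum_range_one,
        pow_zero, one_mul, show (2:ℕ) - 2 * 0 - 2 = 0 by norm_num, Gq_zero hF2 hc,
        pow_one] at E
      rw [A_two, if_pos (by decide)]
      linarith
  · obtain ⟨m, rfl⟩ : ∃ m, n = m + 3 := ⟨n - 3, by omega⟩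
    have hrec := recurrence (F := F) (m := m) hc
    have hIH : ∀ c' : F, c' ≠ 0 → (N F (m + 1) c' : ℚ)
        = A F (m + 1) - (if Even (m + 1) then (quadraticChar F c' : ℚ) else 0) :=
      fun c' hc' => IH (m + 1) (by omega) (by omega) c' hc'
    have hG : Gq F (m + 1) c = ((Fintype.card F : ℚ) - 1)
        * (A F (m + 1) - (if Even (m + 1) then (quadraticChar F c : ℚ) else 0)) := by
      rw [Gq]
      have h1 : ∀ u ∈ Finset.univ.erase (0:F), (N F (m + 1) (c * u⁻¹ ^ 2) : ℚ)
          = A F (m + 1) - (if Even (m + 1) then (quadraticChar F c : ℚ) else 0) := by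
        intro u hu
        have hu0 : u ≠ 0 := (Finset.mem_erase.mp hu).1
        have hcu : c * u⁻¹ ^ 2 ≠ 0 := mul_ne_zero hc (pow_ne_zero 2 (inv_ne_zero hu0))
        have hchi : quadraticChar F (c * u⁻¹ ^ 2) = quadraticChar F c := by
          rw [map_mul, map_pow, quadraticChar_sq_one (inv_ne_zero hu0), mul_one]
        rw [hIH _ hcu, hchi]
      rw [Finset.sum_congr rfl h1, Finset.sum_const,
        Finset.card_erase_of_mem (Finset.mem_univ 0), Finset.card_univ, nsmul_eq_mul]
      have hq1 : (1:ℕ) ≤ Fintype.card F := Fintype.card_pos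
      push_cast [Nat.cast_sub hq1]
      ring
    have hpar : (if Even (m + 3) then (quadraticChar F c : ℚ) else 0)
        = (if Even (m + 1) then (quadraticChar F c : ℚ) else 0) := by
      have hiff : Even (m + 3) ↔ Even (m + 1) := by
        rw [show m + 3 = m + 1 + 1 + 1 by omega, Nat.even_add_one, Nat.even_add_one, not_not]
      by_cases h : Even (m + 1)
      · rw [if_pos h, if_pos (hiff.mpr h)]
      · rw [if_neg h, if_neg (fun hh => h (hiff.mp hh))]
    have hA : A F (m + 3) = (Fintype.card F : ℚ) ^ (m + 2) - (Fintype.card F : ℚ) ^ (m + 1)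
        + A F (m + 1) := A_step (m + 1)
    rw [hrec, hIH c hc, hG, hA, hpar]
    ring

lemma N_zero (hF2 : ringChar F ≠ 2) {n : ℕ} (hn : 2 ≤ n) :
    (N F n 0 : ℚ) = ((Fintype.card F : ℚ) - 1) * A F (n - 1) := by
  have hbij : N F n 0
      = ((monics F (n - 1)).filter (fun u => Squarefree u ∧ u.coeff 0 ≠ 0)).card := by
    rw [N]
    refine Finset.card_bij' (fun f _ => f.divX) (fun u _ => X * u) ?_ ?_ ?_ ?_
    · intro f hf
      rw [Finset.mem_filter, mem_monics] at hf
      obtain ⟨⟨hm, hd⟩, hsf, hc0⟩ := hf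
      have hfx : X * f.divX = f := by
        have := X_mul_divX_add f
        rwa [hc0, C_0, add_zero] at this
      have hdm : f.divX.Monic := monic_X.of_mul_monic_left (hfx.symm ▸ hm)
      have hsf2 := squarefree_mul_iff.mp (hfx.symm ▸ hsf)
      rw [Finset.mem_filter, mem_monics]
      refine ⟨⟨hdm, by rw [natDegree_divX_eq_natDegree_tsub_one, hd]⟩, hsf2.2.2, ?_⟩
      intro h
      exact not_isUnit_X (hsf2.1 dvd_rfl (X_dvd_iff.mpr h))
    · intro u hu
      rw [Finset.mem_filter, mem_monics] at hu
      obtain ⟨⟨hm, hd⟩, hsf, hc0⟩ := hu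
      rw [Finset.mem_filter, mem_monics]
      refine ⟨⟨monic_X.mul hm, ?_⟩, ?_, ?_⟩
      · rw [monic_X.natDegree_mul hm, natDegree_X, hd]
        omega
      · exact squarefree_mul_iff.mpr
          ⟨irreducible_X.isRelPrime_iff_not_dvd.mpr (fun hdvd => hc0 (X_dvd_iff.mp hdvd)),
            prime_X.squarefree, hsf⟩
      · rw [mul_coeff_zero, coeff_X_zero, zero_mul]
    · intro f hf
      rw [Finset.mem_filter] at hf
      have hc0 := hf.2.2
      have h := X_mul_divX_add f
      rwa [hc0, C_0, add_zero] at h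
    · intro u hu
      have h := X_mul_divX_add (X * u)
      rw [mul_coeff_zero, coeff_X_zero, zero_mul, C_0, add_zero] at h
      exact mul_left_cancel₀ X_ne_zero h
  have hfib : ((monics F (n - 1)).filter (fun u => Squarefree u ∧ u.coeff 0 ≠ 0)).card
      = ∑ v ∈ Finset.univ.erase (0:F), N F (n - 1) v := by
    have hmaps : ∀ u ∈ (monics F (n - 1)).filter (fun u => Squarefree u ∧ u.coeff 0 ≠ 0),
        u.coeff 0 ∈ Finset.univ.erase (0:F) := by
      intro u hu
      rw [Finset.mem_filter] at hu
      exact Finset.mem_erase.mpr ⟨hu.2.2, Finset.mem_univ _⟩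
    rw [Finset.card_eq_sum_card_fiberwise hmaps]
    refine Finset.sum_congr rfl fun v hv => ?_
    have hv0 : v ≠ 0 := (Finset.mem_erase.mp hv).1
    rw [N]
    congr 1
    rw [Finset.filter_filter]
    refine Finset.filter_congr fun u _ => ?_
    constructor
    · rintro ⟨⟨h1, -⟩, h2⟩
      exact ⟨h1, h2⟩
    · rintro ⟨h1, h2⟩
      exact ⟨⟨h1, h2 ▸ hv0⟩, h2⟩
  have hchisum : ∑ v ∈ Finset.univ.erase (0:F), (quadraticChar F v : ℚ) = 0 := by
    have h0 : ∑ v : F, (quadraticChar F v : ℚ) = 0 := by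
      exact_mod_cast congrArg (fun z : ℤ => (z : ℚ)) (quadraticChar_sum_zero hF2)
    rw [← Finset.sum_erase_add _ _ (Finset.mem_univ (0:F))] at h0
    simpa using h0
  rw [hbij, hfib]
  push_cast
  have hform : ∀ v ∈ Finset.univ.erase (0:F), (N F (n - 1) v : ℚ)
      = A F (n - 1) - (if Even (n - 1) then (quadraticChar F v : ℚ) else 0) :=
    fun v hv => N_formula hF2 (n - 1) (by omega) v (Finset.mem_erase.mp hv).1
  rw [Finset.sum_congr rfl hform, Finset.sum_sub_distrib, Finset.sum_const,
    Finset.card_erase_of_mem (Finset.mem_univ 0), Finset.card_univ, nsmul_eq_mul]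
  have hq1 : (1:ℕ) ≤ Fintype.card F := Fintype.card_pos
  by_cases he : Even (n - 1)
  · simp only [if_pos he]
    rw [hchisum]
    push_cast [Nat.cast_sub hq1]
    ring
  · simp only [if_neg he]
    rw [Finset.sum_const_zero]
    push_cast [Nat.cast_sub hq1]
    ring

lemma squarefree_comp {f : F[X]} (t : F) (hf : Squarefree f) :
    Squarefree (f.comp (X + C t)) := by
  intro x hx
  have hfe : (algEquivAevalXAddC t) f = f.comp (X + C t) := rfl
  rw [← hfe] at hx
  have h1 : (algEquivAevalXAddC t).symm x * (algEquivAevalXAddC t).symm x ∣ f := by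
    have h2 := map_dvd (algEquivAevalXAddC t).symm hx
    rw [map_mul, AlgEquiv.symm_apply_apply] at h2
    exact h2
  have h3 := (hf _ h1).map (algEquivAevalXAddC t)
  rwa [AlgEquiv.apply_symm_apply] at h3

lemma translate (n : ℕ) (x : F) (v : F) :
    ((monics F n).filter (fun f => Squarefree f ∧ v = f.eval x)).card = N F n v := by
  have hX : (X - C x : F[X]) = X + C (-x) := by
    rw [C_neg, sub_eq_add_neg]
  have hcomp1 : (X + C x : F[X]).comp (X - C x) = X := by
    rw [add_comp, X_comp, C_comp, sub_add_cancel]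
  have hcomp2 : (X - C x : F[X]).comp (X + C x) = X := by
    rw [sub_comp, X_comp, C_comp, add_sub_cancel_right]
  rw [N]
  refine Finset.card_bij' (fun f _ => f.comp (X + C x)) (fun h _ => h.comp (X - C x))
    ?_ ?_ ?_ ?_
  · intro f hf
    rw [Finset.mem_filter, mem_monics] at hf
    obtain ⟨⟨hm, hd⟩, hsf, hv⟩ := hf
    rw [Finset.mem_filter, mem_monics]
    refine ⟨⟨hm.comp_X_add_C x, ?_⟩, squarefree_comp x hsf, ?_⟩
    · rw [natDegree_comp, natDegree_X_add_C, mul_one, hd]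
    · rw [coeff_zero_eq_eval_zero, eval_comp, eval_add, eval_X, eval_C, zero_add]
      exact hv.symm
  · intro h hh
    rw [Finset.mem_filter, mem_monics] at hh
    obtain ⟨⟨hm, hd⟩, hsf, hc0⟩ := hh
    rw [Finset.mem_filter, mem_monics]
    refine ⟨⟨?_, ?_⟩, ?_, ?_⟩
    · rw [hX]
      exact hm.comp_X_add_C (-x)
    · rw [natDegree_comp, natDegree_X_sub_C, mul_one, hd]
    · rw [hX]
      exact squarefree_comp (-x) hsf
    · rw [eval_comp, eval_sub, eval_X, eval_C, sub_self, ← coeff_zero_eq_eval_zero, hc0]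
  · intro f _
    show (f.comp (X + C x)).comp (X - C x) = f
    rw [comp_assoc, hcomp1, comp_X]
  · intro h _
    show (h.comp (X - C x)).comp (X + C x) = h
    rw [comp_assoc, hcomp2, comp_X]

end AvgSE

/-- If both `n` and `d` are even (`n > 2`), then excluding finitely many
characteristics, for every finite field `F` of cardinality `q` coprime to `d`,
the average over monic square-free polynomials `f` of degree `n` of the number
of points `(x, y)` with `y ^ d = f x` equals `q - q ^ (-(n - 2))`. -/
theorem average_points_superelliptic_even (n d : ℕ) (hn : 2 < n)
    (hne : Even n) (hde : Even d) :
    ∃ S : Finset ℕ, ∀ (F : Type) [Field F] [Fintype F],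
      ringChar F ∉ S → Nat.Coprime (Fintype.card F) d →
      (Nat.card {p : Polynomial F × F × F //
          p.1.Monic ∧ Squarefree p.1 ∧ p.1.natDegree = n ∧
          p.2.2 ^ d = p.1.eval p.2.1} : ℚ) /
        ((Fintype.card F : ℚ) ^ n - (Fintype.card F : ℚ) ^ (n - 1)) =
      (Fintype.card F : ℚ) - (Fintype.card F : ℚ) ^ (-((n : ℤ) - 2)) := by
  obtain ⟨m, rfl⟩ : ∃ m, n = m + 3 := ⟨n - 3, by omega⟩
  refine ⟨∅, fun F _ _ _ hco => ?_⟩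
  classical
  have hq2 : 2 ≤ Fintype.card F := Fintype.one_lt_card
  have hd0 : d ≠ 0 := by
    rintro rfl
    rw [Nat.coprime_zero_right] at hco
    omega
  have h2d : 2 ∣ d := hde.two_dvd
  have hqodd : ¬ 2 ∣ Fintype.card F := by
    intro h2
    have h1 : (2:ℕ) ∣ 1 := hco ▸ Nat.dvd_gcd h2 h2d
    norm_num at h1
  have hF2 : ringChar F ≠ 2 := by
    intro h2
    obtain ⟨r, -, hr⟩ := FiniteField.card F (ringChar F)
    rw [h2] at hr
    exact hqodd (hr ▸ dvd_pow_self 2 r.ne_zero)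
  -- Step A : the numerator as a finset count
  set big := ((AvgSE.monics F (m + 3)) ×ˢ (Finset.univ : Finset (F × F))).filter
    (fun p : Polynomial F × F × F => Squarefree p.1 ∧ p.2.2 ^ d = p.1.eval p.2.1) with hbigdef
  have hA : Nat.card {p : Polynomial F × F × F //
      p.1.Monic ∧ Squarefree p.1 ∧ p.1.natDegree = (m + 3) ∧
        p.2.2 ^ d = p.1.eval p.2.1} = big.card := by
    have he : ∀ p : Polynomial F × F × F,
        (p.1.Monic ∧ Squarefree p.1 ∧ p.1.natDegree = (m + 3) ∧
          p.2.2 ^ d = p.1.eval p.2.1) ↔ p ∈ big := by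
      intro p
      rw [hbigdef, Finset.mem_filter, Finset.mem_product, AvgSE.mem_monics]
      constructor
      · rintro ⟨h1, h2, h3, h4⟩
        exact ⟨⟨⟨h1, h3⟩, Finset.mem_univ _⟩, h2, h4⟩
      · rintro ⟨⟨⟨h1, h3⟩, -⟩, h2, h4⟩
        exact ⟨h1, h2, h3, h4⟩
    rw [Nat.card_congr (Equiv.subtypeEquivRight he), Nat.card_eq_finsetCard]
  have hB : big.card = ∑ z : F × F,
      ((AvgSE.monics F (m + 3)).filter
        (fun f => Squarefree f ∧ z.2 ^ d = f.eval z.1)).card := by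
    rw [Finset.card_eq_sum_card_fiberwise
      (f := fun p : Polynomial F × F × F => p.2) (t := Finset.univ)
      (fun _ _ => Finset.mem_univ _)]
    refine Finset.sum_congr rfl fun z _ => ?_
    refine Finset.card_bij' (fun p _ => p.1) (fun f _ => (f, z)) ?_ ?_ ?_ ?_
    · intro p hp
      rw [Finset.mem_filter] at hp
      obtain ⟨hpb, hpz⟩ := hp
      rw [hbigdef, Finset.mem_filter, Finset.mem_product] at hpb
      subst hpz
      rw [Finset.mem_filter]
      exact ⟨hpb.1.1, hpb.2.1, hpb.2.2⟩
    · intro f hf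
      rw [Finset.mem_filter] at hf
      rw [Finset.mem_filter, hbigdef, Finset.mem_filter, Finset.mem_product]
      exact ⟨⟨⟨hf.1, Finset.mem_univ _⟩, hf.2.1, hf.2.2⟩, rfl⟩
    · intro p hp
      rw [Finset.mem_filter] at hp
      exact Prod.ext rfl hp.2.symm
    · intro f _
      rfl
  have hC : ∀ z : F × F, ((AvgSE.monics F (m + 3)).filter
      (fun f => Squarefree f ∧ z.2 ^ d = f.eval z.1)).card = AvgSE.N F (m + 3) (z.2 ^ d) :=
    fun z => AvgSE.translate (m + 3) z.1 (z.2 ^ d)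
  -- the sum over y
  have hterm : ∀ y ∈ Finset.univ.erase (0:F),
      (AvgSE.N F (m + 3) (y ^ d) : ℚ) = AvgSE.A F (m + 3) - 1 := by
    intro y hy0
    have hy0' : y ≠ 0 := (Finset.mem_erase.mp hy0).1
    have hyd : y ^ d ≠ 0 := pow_ne_zero _ hy0'
    have hchi : quadraticChar F (y ^ d) = 1 := by
      rw [map_pow]
      rcases quadraticChar_dichotomy hy0' with h | h
      · rw [h, one_pow]
      · rw [h]
        exact Even.neg_one_pow hde
    rw [AvgSE.N_formula hF2 (m + 3) (by omega) _ hyd, if_pos hne, hchi]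
    norm_num
  have hzero : (AvgSE.N F (m + 3) ((0:F) ^ d) : ℚ)
      = ((Fintype.card F : ℚ) - 1) * AvgSE.A F (m + 2) := by
    rw [zero_pow hd0]
    have := AvgSE.N_zero (F := F) hF2 (n := m + 3) (by omega)
    rwa [show m + 3 - 1 = m + 2 by omega] at this
  have hy : ∑ y : F, (AvgSE.N F (m + 3) (y ^ d) : ℚ)
      = ((Fintype.card F : ℚ) - 1) * (AvgSE.A F (m + 2) + AvgSE.A F (m + 3) - 1) := by
    rw [← Finset.sum_erase_add _ _ (Finset.mem_univ (0:F))]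
    rw [Finset.sum_congr rfl hterm, Finset.sum_const,
      Finset.card_erase_of_mem (Finset.mem_univ 0), Finset.card_univ, nsmul_eq_mul, hzero]
    have hq1 : (1:ℕ) ≤ Fintype.card F := Fintype.card_pos
    push_cast [Nat.cast_sub hq1]
    ring
  have hAadd : AvgSE.A F (m + 2) + AvgSE.A F (m + 3) = (Fintype.card F : ℚ) ^ (m + 2) :=
    AvgSE.A_succ (m + 2)
  -- numerator total
  have hnum : (Nat.card {p : Polynomial F × F × F //
      p.1.Monic ∧ Squarefree p.1 ∧ p.1.natDegree = (m + 3) ∧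
        p.2.2 ^ d = p.1.eval p.2.1} : ℚ)
      = (Fintype.card F : ℚ) * (((Fintype.card F : ℚ) - 1)
          * ((Fintype.card F : ℚ) ^ (m + 2) - 1)) := by
    rw [hA, hB]
    push_cast
    rw [Finset.sum_congr rfl (fun z _ => by rw [hC z])]
    have h1 : ∀ x : F, (∑ y : F, (AvgSE.N F (m + 3) (((x, y) : F × F).2 ^ d) : ℚ))
        = ∑ y : F, (AvgSE.N F (m + 3) (y ^ d) : ℚ) := fun _ => rfl
    rw [← Finset.univ_product_univ, Finset.sum_product,
      Finset.sum_congr rfl (fun x _ => h1 x), Finset.sum_const, Finset.card_univ,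
      nsmul_eq_mul]
    rw [hy, hAadd]
  rw [hnum]
  -- final arithmetic
  have hqQ : (2:ℚ) ≤ (Fintype.card F : ℚ) := by exact_mod_cast hq2
  have hq0 : (Fintype.card F : ℚ) ≠ 0 := by linarith
  have hq1 : (Fintype.card F : ℚ) - 1 ≠ 0 := by
    intro h
    have : (Fintype.card F : ℚ) = 1 := by linarith
    linarith
  have hzp : (Fintype.card F : ℚ) ^ (-(((m + 3 : ℕ) : ℤ) - 2))
      = ((Fintype.card F : ℚ) ^ (m + 1 : ℕ))⁻¹ := by
    rw [show (-(((m + 3 : ℕ) : ℤ) - 2)) = -((m + 1 : ℕ) : ℤ) by push_cast; ring]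
    rw [zpow_neg, zpow_natCast]
  rw [hzp, show (m + 3) - 1 = m + 2 by omega]
  have hpow0 : (Fintype.card F : ℚ) ^ (m + 1) ≠ 0 := pow_ne_zero _ hq0
  have hden : (Fintype.card F : ℚ) ^ (m + 3) - (Fintype.card F : ℚ) ^ (m + 2)
      = (Fintype.card F : ℚ) ^ (m + 2) * ((Fintype.card F : ℚ) - 1) := by
    ring
  rw [hden]
  have hdenne : (Fintype.card F : ℚ) ^ (m + 2) * ((Fintype.card F : ℚ) - 1) ≠ 0 :=
    mul_ne_zero (pow_ne_zero _ hq0) hq1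
  field_simp
  ring
end
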